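/- arXiv:1607.07060 — 5 statements merged into one kernel-verified Lean document; each statement's English description precedes it below -/
import Mathlib

section
/- There exists a function det₂ of n+1 vectors in F₂ⁿ with values in F₂ such that: (a) det₂(k₁,...,k_{n+1}) = 0 whenever the rank of the collection k₁,...,k_{n+1} is less than n, and (b) if the vectors k₁,...,k_{n+1} have rank exactly n and satisfy a unique (up to scaling, but over F₂ unique) nontrivial linear relation λ¹k₁ + ... + λ^{n+1}k_{n+1} = 0, then det₂(k₁,...,k_{n+1}) = λ¹ + ... + λ^{n+1} + 1. -/
lemma det2_uniq (n : ℕ) (k : Fin (n + 1) → Fin n → ZMod 2)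
    (hrank : Module.finrank (ZMod 2) (Submodule.span (ZMod 2) (Set.range k)) = n)
    (lam mu : Fin (n + 1) → ZMod 2) (hlam : lam ≠ 0) (hmu : mu ≠ 0)
    (h1 : ∀ j, ∑ i, lam i * k i j = 0) (h2 : ∀ j, ∑ i, mu i * k i j = 0) :
    lam = mu := by
  set L : (Fin (n + 1) → ZMod 2) →ₗ[ZMod 2] (Fin n → ZMod 2) :=
    Fintype.linearCombination (ZMod 2) k with hL
  have hmem : ∀ c : Fin (n + 1) → ZMod 2, (∀ j, ∑ i, c i * k i j = 0) →
      c ∈ LinearMap.ker L := by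
    intro c hc
    rw [LinearMap.mem_ker]
    funext j
    rw [hL, Fintype.linearCombination_apply]
    simpa [Finset.sum_apply] using hc j
  have hker : Module.finrank (ZMod 2) (LinearMap.ker L) = 1 := by
    have h := LinearMap.finrank_range_add_finrank_ker L
    have hr : LinearMap.range L = Submodule.span (ZMod 2) (Set.range k) := by
      rw [hL]; exact Fintype.range_linearCombination (ZMod 2) k
    rw [hr, hrank] at h
    rw [Module.finrank_fin_fun] at h
    omega
  obtain ⟨v, hv, huniv⟩ := finrank_eq_one_iff'.mp hker
  have key : ∀ c : Fin (n + 1) → ZMod 2, c ≠ 0 → (∀ j, ∑ i, c i * k i j = 0) →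
      c = (v : Fin (n + 1) → ZMod 2) := by
    intro c hc hcr
    obtain ⟨a, ha⟩ := huniv ⟨c, hmem c hcr⟩
    have ha' : a • (v : Fin (n + 1) → ZMod 2) = c := congrArg Subtype.val ha
    fin_cases a
    · exfalso; apply hc; rw [← ha']; exact zero_smul (ZMod 2) _
    · rw [← ha']; exact one_smul (ZMod 2) _
  rw [key lam hlam h1, key mu hmu h2]

/-- Existence of the 2-determinant `det₂` of `n+1` vectors in `F₂ⁿ`:
it vanishes on tuples of rank `< n`, and on tuples of rank `n` with (unique) nonzero
relation `∑ λᵢ kᵢ = 0` it equals `∑ λᵢ + 1`. -/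
theorem det2_exists (n : ℕ) :
    ∃ D : (Fin (n + 1) → Fin n → ZMod 2) → ZMod 2,
      (∀ k : Fin (n + 1) → Fin n → ZMod 2,
        Module.finrank (ZMod 2) (Submodule.span (ZMod 2) (Set.range k)) < n → D k = 0) ∧
      (∀ (k : Fin (n + 1) → Fin n → ZMod 2) (lam : Fin (n + 1) → ZMod 2),
        Module.finrank (ZMod 2) (Submodule.span (ZMod 2) (Set.range k)) = n →
        lam ≠ 0 → (∀ j, ∑ i, lam i * k i j = 0) →
        D k = (∑ i, lam i) + 1) := by
  classical
  refine ⟨fun k =>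
    if h : ∃ lam : Fin (n + 1) → ZMod 2, lam ≠ 0 ∧ (∀ j, ∑ i, lam i * k i j = 0) ∧
        Module.finrank (ZMod 2) (Submodule.span (ZMod 2) (Set.range k)) = n
    then (∑ i, h.choose i) + 1 else 0, ?_, ?_⟩
  · intro k hk
    exact dif_neg (by rintro ⟨lam, -, -, hr⟩; omega)
  · intro k lam hrank hlam hrel
    have hex : ∃ mu : Fin (n + 1) → ZMod 2, mu ≠ 0 ∧ (∀ j, ∑ i, mu i * k i j = 0) ∧
        Module.finrank (ZMod 2) (Submodule.span (ZMod 2) (Set.range k)) = n :=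
      ⟨lam, hlam, hrel, hrank⟩
    refine (dif_pos hex).trans ?_
    obtain ⟨hmu0, hmur, -⟩ := hex.choose_spec
    rw [det2_uniq n k hrank hex.choose lam hmu0 hlam hmur hrel]
end

section
/- The function det₂ on (n+1)-tuples of vectors in F₂ⁿ is multilinear: for each index i and vectors u, v ∈ F₂ⁿ, det₂(k₁,...,k_{i-1}, u+v, k_{i+1},...,k_{n+1}) = det₂(k₁,...,k_{i-1}, u, k_{i+1},...,k_{n+1}) + det₂(k₁,...,k_{i-1}, v, k_{i+1},...,k_{n+1}). -/
open Classical in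
/-- The 2-determinant of `n+1` vectors in `F₂ⁿ`: equals `0` if the rank of the vectors
is less than `n`, and `∑ λᵢ + 1` for the unique nonzero relation `∑ λᵢ kᵢ = 0` otherwise. -/
noncomputable def det2 (n : ℕ) (k : Fin (n + 1) → Fin n → ZMod 2) : ZMod 2 :=
  if h : Module.finrank (ZMod 2) (Submodule.span (ZMod 2) (Set.range k)) = n ∧
      ∃ lam : Fin (n + 1) → ZMod 2, lam ≠ 0 ∧ ∀ j, ∑ i, lam i * k i j = 0
  then (∑ i, h.2.choose i) + 1
  else 0

lemma zmod2_cases (a : ZMod 2) : a = 0 ∨ a = 1 := by revert a; decide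
lemma zmod2_add_self (a : ZMod 2) : a + a = 0 := by revert a; decide

section Aux
variable {n : ℕ}

noncomputable def Lmap (f : Fin (n+1) → Fin n → ZMod 2) :
    (Fin (n+1) → ZMod 2) →ₗ[ZMod 2] (Fin n → ZMod 2) :=
  Fintype.linearCombination (ZMod 2) f

lemma Lmap_apply (f : Fin (n+1) → Fin n → ZMod 2) (lam : Fin (n+1) → ZMod 2) (j : Fin n) :
    Lmap f lam j = ∑ i, lam i * f i j := by
  simp [Lmap, Fintype.linearCombination_apply, Finset.sum_apply]

lemma Lmap_eq_zero_iff (f : Fin (n+1) → Fin n → ZMod 2) (lam : Fin (n+1) → ZMod 2) :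
    Lmap f lam = 0 ↔ ∀ j, ∑ i, lam i * f i j = 0 := by
  rw [funext_iff]
  exact forall_congr' fun j => by rw [Lmap_apply]; rfl

lemma Lmap_range (f : Fin (n+1) → Fin n → ZMod 2) :
    LinearMap.range (Lmap f) = Submodule.span (ZMod 2) (Set.range f) :=
  Fintype.range_linearCombination _ _

lemma finrank_ker_eq (f : Fin (n+1) → Fin n → ZMod 2)
    (hrank : Module.finrank (ZMod 2) (Submodule.span (ZMod 2) (Set.range f)) = n) :
    Module.finrank (ZMod 2) (LinearMap.ker (Lmap f)) = 1 := by
  have h := LinearMap.finrank_range_add_finrank_ker (Lmap f)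
  rw [Lmap_range, hrank, Module.finrank_fin_fun] at h
  omega

lemma rel_unique (f : Fin (n+1) → Fin n → ZMod 2)
    (hrank : Module.finrank (ZMod 2) (Submodule.span (ZMod 2) (Set.range f)) = n)
    {lam mu : Fin (n+1) → ZMod 2} (hl : lam ≠ 0) (hm : mu ≠ 0)
    (hlr : ∀ j, ∑ i, lam i * f i j = 0) (hmr : ∀ j, ∑ i, mu i * f i j = 0) : lam = mu := by
  have h1 := finrank_ker_eq f hrank
  have hlk : lam ∈ LinearMap.ker (Lmap f) := (Lmap_eq_zero_iff f lam).2 hlr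
  have hmk : mu ∈ LinearMap.ker (Lmap f) := (Lmap_eq_zero_iff f mu).2 hmr
  have hnz : (⟨lam, hlk⟩ : LinearMap.ker (Lmap f)) ≠ 0 := by
    intro h; exact hl (congrArg Subtype.val h)
  obtain ⟨c, hc⟩ := (finrank_eq_one_iff_of_nonzero' _ hnz).1 h1 ⟨mu, hmk⟩
  have hc' : c • lam = mu := congrArg Subtype.val hc
  rcases zmod2_cases c with rfl | rfl
  · rw [zero_smul] at hc'; exact absurd hc'.symm hm
  · rw [one_smul] at hc'; exact hc'

lemma det2_eq (f : Fin (n+1) → Fin n → ZMod 2)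
    (hrank : Module.finrank (ZMod 2) (Submodule.span (ZMod 2) (Set.range f)) = n)
    (lam : Fin (n+1) → ZMod 2) (hl : lam ≠ 0) (hrel : ∀ j, ∑ i, lam i * f i j = 0) :
    det2 n f = (∑ i, lam i) + 1 := by
  have h : Module.finrank (ZMod 2) (Submodule.span (ZMod 2) (Set.range f)) = n ∧
      ∃ lam : Fin (n + 1) → ZMod 2, lam ≠ 0 ∧ ∀ j, ∑ i, lam i * f i j = 0 :=
    ⟨hrank, lam, hl, hrel⟩
  rw [det2, dif_pos h,
    rel_unique f hrank h.2.choose_spec.1 hl h.2.choose_spec.2 hrel]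

lemma det2_eq_zero (f : Fin (n+1) → Fin n → ZMod 2)
    (h : Module.finrank (ZMod 2) (Submodule.span (ZMod 2) (Set.range f)) ≠ n) :
    det2 n f = 0 := by
  rw [det2, dif_neg]
  exact fun hc => h hc.1

end Aux

/-- `det₂` is multilinear: it is additive in each of its `n+1` arguments. -/
theorem det2_multilinear (n : ℕ) (k : Fin (n + 1) → Fin n → ZMod 2) (i : Fin (n + 1))
    (u v : Fin n → ZMod 2) :
    det2 n (Function.update k i (u + v)) =
      det2 n (Function.update k i u) + det2 n (Function.update k i v) := by
  classical
  set S : Set (Fin n → ZMod 2) := k '' {i}ᶜ with hSdef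
  set W : Submodule (ZMod 2) (Fin n → ZMod 2) := Submodule.span (ZMod 2) S with hWdef
  have hfe : Module.finrank (ZMod 2) (Fin n → ZMod 2) = n := Module.finrank_fin_fun (ZMod 2)
  have hrange : ∀ x, Set.range (Function.update k i x) = insert x S := by
    intro x; ext y; constructor
    · rintro ⟨j, rfl⟩
      by_cases hj : j = i
      · subst hj; simp
      · exact Or.inr ⟨j, hj, by rw [Function.update_of_ne hj]⟩
    · intro hy
      rcases Set.mem_insert_iff.1 hy with rfl | ⟨j, hj, rfl⟩
      · exact ⟨i, by simp⟩
      · exact ⟨j, by rw [Function.update_of_ne hj]⟩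
  have hspan : ∀ x, Submodule.span (ZMod 2) (Set.range (Function.update k i x))
      = Submodule.span (ZMod 2) {x} ⊔ W := by
    intro x; rw [hrange, Submodule.span_insert]
  have hWle : Module.finrank (ZMod 2) W ≤ n := by have := W.finrank_le; omega
  -- the updated family with 0 in slot i
  set k₀ : Fin (n+1) → Fin n → ZMod 2 := Function.update k i 0 with hk₀def
  have hk₀i : k₀ i = 0 := Function.update_self i 0 k
  have hk₀ne : ∀ j, j ≠ i → k₀ j = k j := fun j hj => Function.update_of_ne hj 0 k
  have hL₀range : LinearMap.range (Lmap k₀) = W := by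
    rw [Lmap_range, hrange 0, Submodule.span_insert_zero, ← hWdef]
  -- finrank of span of updated family, when x ∈ W
  have hmem_span : ∀ x, x ∈ W →
      Submodule.span (ZMod 2) (Set.range (Function.update k i x)) = W := by
    intro x hx
    rw [hspan, sup_eq_right.2 ((Submodule.span_singleton_le_iff_mem x W).2 hx)]
  have hsup_le : ∀ x : Fin n → ZMod 2,
      Module.finrank (ZMod 2) ↥(Submodule.span (ZMod 2) {x} ⊔ W)
      ≤ Module.finrank (ZMod 2) W + 1 := by
    intro x
    have h1 := Submodule.finrank_sup_add_finrank_inf_eq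
      (Submodule.span (ZMod 2) ({x} : Set (Fin n → ZMod 2))) W
    have h2 : Module.finrank (ZMod 2) (Submodule.span (ZMod 2) ({x} : Set (Fin n → ZMod 2))) ≤ 1 := by
      rcases eq_or_ne x 0 with rfl | hx
      · rw [Submodule.span_zero_singleton]; simp
      · rw [finrank_span_singleton hx]
    omega
  have hrank_notmem : ∀ x, x ∉ W → Module.finrank (ZMod 2) W + 1 = n →
      Module.finrank (ZMod 2)
        (Submodule.span (ZMod 2) (Set.range (Function.update k i x))) = n := by
    intro x hx hm
    rw [hspan]
    have hxs : x ∈ Submodule.span (ZMod 2) {x} ⊔ W :=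
      Submodule.mem_sup_left (Submodule.mem_span_singleton_self x)
    have hlt : W < Submodule.span (ZMod 2) {x} ⊔ W := by
      refine lt_of_le_of_ne le_sup_right fun he => ?_
      rw [← he] at hxs; exact hx hxs
    have h1 := Submodule.finrank_lt_finrank_of_lt hlt
    have h2 := hsup_le x
    omega
  rcases eq_or_ne (Module.finrank (ZMod 2) W) n with hm | hm'
  · -- Case: the other vectors span everything
    have hWtop : W = ⊤ := Submodule.eq_top_of_finrank_eq (hm.trans hfe.symm)
    have hLupd : ∀ c : Fin (n+1) → ZMod 2, Lmap k₀ (Function.update c i 0) = Lmap k₀ c := by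
      intro c; funext col
      rw [Lmap_apply, Lmap_apply]
      refine Finset.sum_congr rfl fun j _ => ?_
      by_cases hj : j = i
      · subst hj; rw [Function.update_self, hk₀i]; simp
      · rw [Function.update_of_ne hj]
    have hexists : ∀ x : Fin n → ZMod 2, ∃ c, Lmap k₀ c = x ∧ c i = 0 := by
      intro x
      have hx : x ∈ LinearMap.range (Lmap k₀) := by rw [hL₀range, hWtop]; trivial
      obtain ⟨c, hc⟩ := hx
      exact ⟨Function.update c i 0, by rw [hLupd c]; exact hc, Function.update_self i 0 c⟩
    -- given such c, update c i 1 is the unique relation for family update k i x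
    have hrel : ∀ (x : Fin n → ZMod 2) (c : Fin (n+1) → ZMod 2), Lmap k₀ c = x → c i = 0 →
        ∀ col, ∑ j, Function.update c i 1 j * Function.update k i x j col = 0 := by
      intro x c hc hci col
      have key : ∑ j, (Function.update c i 1 j * Function.update k i x j col
          + c j * k₀ j col) = x col := by
        rw [Finset.sum_eq_single i]
        · rw [Function.update_self, Function.update_self, hci, hk₀i]; simp
        · intro j _ hj
          rw [Function.update_of_ne hj, Function.update_of_ne hj, hk₀ne j hj,
            zmod2_add_self]
        · intro h; exact absurd (Finset.mem_univ i) h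
      rw [Finset.sum_add_distrib] at key
      have h2 : ∑ j, c j * k₀ j col = x col := by rw [← Lmap_apply, hc]
      have h3 : ∑ j, Function.update c i 1 j * Function.update k i x j col
          = (∑ j, Function.update c i 1 j * Function.update k i x j col
              + ∑ j, c j * k₀ j col) + ∑ j, c j * k₀ j col := by
        rw [add_assoc, zmod2_add_self, add_zero]
      rw [h3, key, h2, zmod2_add_self]
    have hrank' : ∀ x : Fin n → ZMod 2, Module.finrank (ZMod 2)
        (Submodule.span (ZMod 2) (Set.range (Function.update k i x))) = n := by
      intro x
      rw [hspan]
      have : Submodule.span (ZMod 2) {x} ⊔ W = ⊤ := by rw [hWtop]; exact sup_top_eq _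
      rw [this, finrank_top, hfe]
    have hne1 : ∀ c : Fin (n+1) → ZMod 2, Function.update c i 1 ≠ 0 := by
      intro c h
      have := congrFun h i
      rw [Function.update_self] at this
      exact one_ne_zero this
    have hsum : ∀ c : Fin (n+1) → ZMod 2,
        ∑ j, Function.update c i 1 j = 1 + ∑ j ∈ Finset.univ \ {i}, c j :=
      fun c => Finset.sum_update_of_mem (Finset.mem_univ i) c 1
    obtain ⟨cu, hcu, hcui⟩ := hexists u
    obtain ⟨cv, hcv, hcvi⟩ := hexists v
    have hcuv : Lmap k₀ (cu + cv) = u + v := by rw [map_add, hcu, hcv]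
    have hcuvi : (cu + cv) i = 0 := by rw [Pi.add_apply, hcui, hcvi, add_zero]
    rw [det2_eq _ (hrank' (u+v)) _ (hne1 (cu+cv)) (hrel (u+v) (cu+cv) hcuv hcuvi),
      det2_eq _ (hrank' u) _ (hne1 cu) (hrel u cu hcu hcui),
      det2_eq _ (hrank' v) _ (hne1 cv) (hrel v cv hcv hcvi),
      hsum, hsum, hsum]
    have hss : ∑ j ∈ Finset.univ \ {i}, (cu + cv) j
        = ∑ j ∈ Finset.univ \ {i}, cu j + ∑ j ∈ Finset.univ \ {i}, cv j := by
      rw [← Finset.sum_add_distrib]; rfl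
    rw [hss]
    have h2 : (1 : ZMod 2) + 1 = 0 := by decide
    linear_combination -h2
  rcases eq_or_ne (Module.finrank (ZMod 2) W + 1) n with hm1 | hm1
  · -- Case: the other vectors span a hyperplane
    have hker2 : Module.finrank (ZMod 2) (LinearMap.ker (Lmap k₀)) = 2 := by
      have h := LinearMap.finrank_range_add_finrank_ker (Lmap k₀)
      rw [hL₀range, Module.finrank_fin_fun] at h
      omega
    set δ : Fin (n+1) → ZMod 2 := Pi.single i 1 with hδdef
    have hδ0 : δ ≠ 0 := by
      intro h
      have := congrFun h i
      rw [hδdef, Pi.single_eq_same] at this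
      exact one_ne_zero this
    have hδk : δ ∈ LinearMap.ker (Lmap k₀) := by
      rw [LinearMap.mem_ker, hδdef]
      show Fintype.linearCombination (ZMod 2) k₀ (Pi.single i 1) = 0
      rw [Fintype.linearCombination_apply_single, hk₀i, smul_zero]
    have hle : Submodule.span (ZMod 2) {δ} ≤ LinearMap.ker (Lmap k₀) :=
      (Submodule.span_singleton_le_iff_mem δ _).2 hδk
    have hne : Submodule.span (ZMod 2) {δ} ≠ LinearMap.ker (Lmap k₀) := by
      intro he
      have h1 : Module.finrank (ZMod 2) (Submodule.span (ZMod 2) ({δ} : Set _)) = 1 :=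
        finrank_span_singleton hδ0
      rw [he, hker2] at h1
      omega
    obtain ⟨μ, hμk, hμs⟩ := SetLike.exists_of_lt (lt_of_le_of_ne hle hne)
    have hμ0 : μ ≠ 0 := fun h => hμs (h ▸ Submodule.zero_mem _)
    have hμδ : μ ≠ δ := fun h => hμs (by rw [h]; exact Submodule.mem_span_singleton_self δ)
    set μ' : Fin (n+1) → ZMod 2 := Function.update μ i 0 with hμ'def
    have hμ'0 : μ' ≠ 0 := by
      intro h
      rcases zmod2_cases (μ i) with h0 | h1
      · apply hμ0; funext j
        by_cases hj : j = i
        · subst hj; exact h0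
        · have := congrFun h j
          rwa [hμ'def, Function.update_of_ne hj] at this
      · apply hμδ; funext j
        by_cases hj : j = i
        · subst hj; rw [h1, hδdef, Pi.single_eq_same]
        · have := congrFun h j
          rw [hμ'def, Function.update_of_ne hj] at this
          rw [this, hδdef, Pi.single_eq_of_ne hj]
          rfl
    have hμrel : ∀ x : Fin n → ZMod 2,
        ∀ col, ∑ j, μ' j * Function.update k i x j col = 0 := by
      intro x col
      have h0 := ((Lmap_eq_zero_iff k₀ μ).1 (LinearMap.mem_ker.1 hμk)) col
      calc ∑ j, μ' j * Function.update k i x j col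
          = ∑ j, μ j * k₀ j col := by
            refine Finset.sum_congr rfl fun j _ => ?_
            by_cases hj : j = i
            · subst hj
              rw [hμ'def, Function.update_self, hk₀i]
              simp
            · rw [hμ'def, Function.update_of_ne hj, Function.update_of_ne hj, hk₀ne j hj]
        _ = 0 := h0
    have hval : ∀ x, x ∉ W → det2 n (Function.update k i x) = (∑ j, μ' j) + 1 := by
      intro x hx
      exact det2_eq _ (hrank_notmem x hx hm1) μ' hμ'0 (hμrel x)
    have hzero : ∀ x, x ∈ W → det2 n (Function.update k i x) = 0 := by
      intro x hx
      refine det2_eq_zero _ ?_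
      rw [hmem_span x hx]
      omega
    have haddW : ∀ x y : Fin n → ZMod 2, x ∉ W → y ∉ W → x + y ∈ W := by
      intro x y hx hy
      have hrk := hrank_notmem x hx hm1
      rw [hspan] at hrk
      have htop : Submodule.span (ZMod 2) {x} ⊔ W = ⊤ :=
        Submodule.eq_top_of_finrank_eq (hrk.trans hfe.symm)
      have hy' : y ∈ Submodule.span (ZMod 2) {x} ⊔ W := htop ▸ Submodule.mem_top
      obtain ⟨a, ha, b, hb, hab⟩ := Submodule.mem_sup.1 hy'
      obtain ⟨c, hc⟩ := Submodule.mem_span_singleton.1 ha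
      rcases zmod2_cases c with rfl | rfl
      · rw [zero_smul] at hc
        rw [← hc, zero_add] at hab
        exact absurd (hab ▸ hb) hy
      · rw [one_smul] at hc
        subst hc
        have : x + y = b := by
          rw [← hab, ← add_assoc]
          funext col
          rw [Pi.add_apply, Pi.add_apply, zmod2_add_self, zero_add]
        rw [this]; exact hb
    by_cases hu : u ∈ W <;> by_cases hv : v ∈ W
    · rw [hzero _ hu, hzero _ hv, hzero _ (W.add_mem hu hv), add_zero]
    · have huv : u + v ∉ W := by
        intro h
        apply hv
        have h2 := W.add_mem h hu
        have : (u + v) + u = v := by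
          funext col
          rw [Pi.add_apply, Pi.add_apply, add_right_comm, zmod2_add_self, zero_add]
        rwa [this] at h2
      rw [hzero _ hu, hval _ hv, hval _ huv, zero_add]
    · have huv : u + v ∉ W := by
        intro h
        apply hu
        have h2 := W.add_mem h hv
        have : (u + v) + v = u := by
          funext col
          rw [Pi.add_apply, Pi.add_apply, add_assoc, zmod2_add_self, add_zero]
        rwa [this] at h2
      rw [hval _ hu, hzero _ hv, hval _ huv, add_zero]
    · rw [hzero _ (haddW u v hu hv), hval _ hu, hval _ hv, zmod2_add_self]
  · -- Case: low rank, everything is zero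
    have hzero : ∀ x : Fin n → ZMod 2, det2 n (Function.update k i x) = 0 := by
      intro x
      refine det2_eq_zero _ ?_
      rw [hspan]
      have h1 := hsup_le x
      omega
    rw [hzero, hzero, hzero, add_zero]
end

section
/- det₂ is the unique nonzero function from (n+1)-tuples of vectors in F₂ⁿ to F₂ that is multilinear, GL_n(F₂)-invariant, and vanishes whenever the rank of the n+1 vectors is less than n. -/
namespace Det2Aux



variable {n : ℕ}

private lemma zmod2_cases (c : ZMod 2) : c = 0 ∨ c = 1 := by revert c; decide

private lemma finrank_V : Module.finrank (ZMod 2) (Fin n → ZMod 2) = n := by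
  rw [Module.finrank_pi, Fintype.card_fin]

/-- rank = n iff span is everything -/
lemma finrank_span_iff (k : Fin (n+1) → Fin n → ZMod 2) :
    Module.finrank (ZMod 2) (Submodule.span (ZMod 2) (Set.range k)) = n ↔
      Submodule.span (ZMod 2) (Set.range k) = ⊤ := by
  constructor
  · intro h
    exact Submodule.eq_top_of_finrank_eq (by rw [h, finrank_V])
  · intro h
    rw [h, finrank_top, finrank_V]

lemma rank_le (k : Fin (n+1) → Fin n → ZMod 2) :
    Module.finrank (ZMod 2) (Submodule.span (ZMod 2) (Set.range k)) ≤ n := by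
  have := Submodule.finrank_le (Submodule.span (ZMod 2) (Set.range k))
  rwa [finrank_V] at this

lemma exists_rel (k : Fin (n+1) → Fin n → ZMod 2) :
    ∃ lam : Fin (n + 1) → ZMod 2, lam ≠ 0 ∧ ∀ j, ∑ i, lam i * k i j = 0 := by
  have hni : ¬ LinearIndependent (ZMod 2) k := by
    intro h
    have := h.fintype_card_le_finrank
    rw [Fintype.card_fin, finrank_V] at this
    omega
  obtain ⟨g, hg0, i0, hi0⟩ := Fintype.not_linearIndependent_iff.1 hni
  refine ⟨g, fun h => hi0 (by rw [h]; rfl), fun j => ?_⟩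
  have := congrFun hg0 j
  simpa [Finset.sum_apply] using this

/-- kernel of the coefficient map is the span of the relation -/
private lemma ker_eq_span (k : Fin (n+1) → Fin n → ZMod 2)
    (hk : Submodule.span (ZMod 2) (Set.range k) = ⊤)
    (lam : Fin (n+1) → ZMod 2) (hlam : lam ≠ 0)
    (hrel : ∀ j, ∑ i, lam i * k i j = 0) :
    LinearMap.ker (Matrix.of fun j i => k i j).mulVecLin
      = Submodule.span (ZMod 2) {lam} := by
  set M : Matrix (Fin n) (Fin (n+1)) (ZMod 2) := Matrix.of fun j i => k i j with hM
  have hrange : LinearMap.range M.mulVecLin = ⊤ := by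
    rw [Matrix.range_mulVecLin]
    have : M.transpose = Matrix.of fun i j => k i j := by
      ext i j; simp [hM, Matrix.transpose_apply]
    rw [Matrix.col, this]
    exact hk
  have hker1 : Module.finrank (ZMod 2) (LinearMap.ker M.mulVecLin) = 1 := by
    have h1 := LinearMap.finrank_range_add_finrank_ker M.mulVecLin
    rw [hrange, finrank_top, finrank_V, Module.finrank_pi, Fintype.card_fin] at h1
    omega
  have hle : Submodule.span (ZMod 2) {lam} ≤ LinearMap.ker M.mulVecLin := by
    rw [Submodule.span_le, Set.singleton_subset_iff]
    rw [SetLike.mem_coe, LinearMap.mem_ker, Matrix.mulVecLin_apply]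
    funext j
    simpa [Matrix.mulVec, dotProduct, hM, mul_comm] using hrel j
  symm
  refine Submodule.eq_of_le_of_finrank_le hle ?_
  rw [hker1, finrank_span_singleton hlam]

lemma rel_unique (k : Fin (n+1) → Fin n → ZMod 2)
    (hk : Submodule.span (ZMod 2) (Set.range k) = ⊤)
    (lam lam' : Fin (n+1) → ZMod 2) (hlam : lam ≠ 0) (hlam' : lam' ≠ 0)
    (hrel : ∀ j, ∑ i, lam i * k i j = 0) (hrel' : ∀ j, ∑ i, lam' i * k i j = 0) :
    lam = lam' := by
  have hker := ker_eq_span k hk lam hlam hrel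
  have hmem : lam' ∈ Submodule.span (ZMod 2) {lam} := by
    rw [← hker, LinearMap.mem_ker, Matrix.mulVecLin_apply]
    funext j
    simpa [Matrix.mulVec, dotProduct, mul_comm] using hrel' j
  obtain ⟨a, ha⟩ := Submodule.mem_span_singleton.1 hmem
  rcases zmod2_cases a with h | h
  · exfalso; apply hlam'; rw [← ha, h, zero_smul]
  · rw [← ha, h, one_smul]

lemma exists_mat (k k' : Fin (n+1) → Fin n → ZMod 2)
    (hk : Submodule.span (ZMod 2) (Set.range k) = ⊤)
    (hk' : Submodule.span (ZMod 2) (Set.range k') = ⊤)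
    (lam : Fin (n+1) → ZMod 2) (hlam : lam ≠ 0)
    (hrel : ∀ j, ∑ i, lam i * k i j = 0) (hrel' : ∀ j, ∑ i, lam i * k' i j = 0) :
    ∃ A : Matrix (Fin n) (Fin n) (ZMod 2), IsUnit A.det ∧ ∀ i, A.mulVec (k i) = k' i := by
  set M : Matrix (Fin n) (Fin (n+1)) (ZMod 2) := Matrix.of fun j i => k i j with hM
  set M' : Matrix (Fin n) (Fin (n+1)) (ZMod 2) := Matrix.of fun j i => k' i j with hM'
  set φ := M.mulVecLin with hφ
  set φ' := M'.mulVecLin with hφ'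
  have hrange : LinearMap.range φ = ⊤ := by
    rw [hφ, Matrix.range_mulVecLin]
    have : M.transpose = Matrix.of fun i j => k i j := by
      ext i j; simp [hM, Matrix.transpose_apply]
    rw [Matrix.col, this]; exact hk
  have hkerk : LinearMap.ker φ = Submodule.span (ZMod 2) {lam} :=
    ker_eq_span k hk lam hlam hrel
  have hkerk' : LinearMap.ker φ ≤ LinearMap.ker φ' := by
    rw [hkerk, Submodule.span_le, Set.singleton_subset_iff, SetLike.mem_coe,
      LinearMap.mem_ker, hφ', Matrix.mulVecLin_apply]
    funext j
    simpa [Matrix.mulVec, dotProduct, hM', mul_comm] using hrel' j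
  obtain ⟨s, hs⟩ := φ.exists_rightInverse_of_surjective hrange
  set ψ := φ'.comp s with hψ
  have hfact : ∀ x, ψ (φ x) = φ' x := by
    intro x
    have h1 : φ (s (φ x)) = φ x := by
      have := congrFun (congrArg (fun f => f.toFun) hs) (φ x)
      simpa using this
    have h2 : s (φ x) - x ∈ LinearMap.ker φ := by
      rw [LinearMap.mem_ker, map_sub, h1, sub_self]
    have h3 := hkerk' h2
    rw [LinearMap.mem_ker, map_sub, sub_eq_zero] at h3
    simpa [hψ] using h3
  -- single basis vectors
  have hsingle : ∀ i, φ (Pi.single i 1) = k i := by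
    intro i
    rw [hφ, Matrix.mulVecLin_apply]
    funext j
    simp [Matrix.mulVec, dotProduct, hM, Pi.single_apply]
  have hsingle' : ∀ i, φ' (Pi.single i 1) = k' i := by
    intro i
    rw [hφ', Matrix.mulVecLin_apply]
    funext j
    simp [Matrix.mulVec, dotProduct, hM', Pi.single_apply]
  have hψk : ∀ i, ψ (k i) = k' i := by
    intro i
    rw [← hsingle i, hfact, hsingle']
  -- ψ is surjective
  have hrange' : LinearMap.range φ' = ⊤ := by
    rw [hφ', Matrix.range_mulVecLin]
    have : M'.transpose = Matrix.of fun i j => k' i j := by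
      ext i j; simp [hM', Matrix.transpose_apply]
    rw [Matrix.col, this]; exact hk'
  have hψsurj : Function.Surjective ψ := by
    intro y
    obtain ⟨z, hz⟩ := LinearMap.range_eq_top.1 hrange' y
    exact ⟨φ z, by rw [hfact]; exact hz⟩
  have hψinj : Function.Injective ψ := LinearMap.injective_iff_surjective.2 hψsurj
  have hψbij : Function.Bijective ψ := ⟨hψinj, hψsurj⟩
  set E := LinearEquiv.ofBijective ψ hψbij with hE
  set A := LinearMap.toMatrix' ψ with hA
  set B := LinearMap.toMatrix' (E.symm : (Fin n → ZMod 2) →ₗ[ZMod 2] (Fin n → ZMod 2)) with hB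
  have hAB : A * B = 1 := by
    rw [hA, hB, ← LinearMap.toMatrix'_comp, ← LinearMap.toMatrix'_id]
    congr 1
    exact LinearMap.ext fun x => E.apply_symm_apply x
  refine ⟨A, ?_, ?_⟩
  · exact IsUnit.of_mul_eq_one B.det (by rw [← Matrix.det_mul, hAB, Matrix.det_one])
  · intro i
    have : A.mulVec (k i) = ψ (k i) := by
      rw [← Matrix.toLin'_apply, hA, Matrix.toLin'_toMatrix']
    rw [this, hψk]





variable {n : ℕ}

/-- basis vectors -/
def e {n : ℕ} (j : Fin n) : Fin n → ZMod 2 := Pi.single j 1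

lemma spanE (T : Fin (n+1) → Fin n → ZMod 2) (h : ∀ j : Fin n, ∃ i, T i = e j) :
    Submodule.span (ZMod 2) (Set.range T) = ⊤ := by
  rw [eq_top_iff, ← (Pi.basisFun (ZMod 2) (Fin n)).span_eq]
  apply Submodule.span_le.2
  rintro x ⟨j, rfl⟩
  obtain ⟨i, hi⟩ := h j
  rw [Pi.basisFun_apply]
  exact Submodule.subset_span ⟨i, hi⟩

lemma spanTrans (k k' : Fin (n+1) → Fin n → ZMod 2)
    (hk : Submodule.span (ZMod 2) (Set.range k) = ⊤)
    (h : ∀ i, k i ∈ Submodule.span (ZMod 2) (Set.range k')) :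
    Submodule.span (ZMod 2) (Set.range k') = ⊤ := by
  rw [eq_top_iff, ← hk]
  apply Submodule.span_le.2
  rintro x ⟨i, rfl⟩
  exact h i

lemma add_add_self (u v : Fin n → ZMod 2) : u + v + v = u := by
  funext j
  show u j + v j + v j = u j
  rw [add_assoc, CharTwo.add_self_eq_zero, add_zero]

def i0 (n : ℕ) : Fin (n+1) := ⟨0, by omega⟩
def i1 {n : ℕ} (hn : 0 < n) : Fin (n+1) := ⟨1, by omega⟩

lemma ne01 (hn : 0 < n) : i0 n ≠ i1 hn := by
  simp [i0, i1, Fin.ext_iff]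

/-- standard tuple with collision at positions 0 and 1 -/
def ks {n : ℕ} (hn : 0 < n) : Fin (n+1) → Fin n → ZMod 2 :=
  fun i => e ⟨(i : ℕ) - 1, by have := i.isLt; omega⟩

lemma ks_i0 (hn : 0 < n) : ks hn (i0 n) = e ⟨0, hn⟩ := rfl

lemma ks_i1 (hn : 0 < n) : ks hn (i1 hn) = e ⟨0, hn⟩ := rfl

lemma ks_succ (hn : 0 < n) (j : Fin n) :
    ks hn ⟨(j : ℕ) + 1, by have := j.isLt; omega⟩ = e j := by
  rfl

lemma succ_ne_i0 (j : Fin n) :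
    (⟨(j : ℕ) + 1, by have := j.isLt; omega⟩ : Fin (n+1)) ≠ i0 n := by
  simp [i0, Fin.ext_iff]

lemma spanks (hn : 0 < n) : Submodule.span (ZMod 2) (Set.range (ks hn)) = ⊤ :=
  spanE _ (fun j => ⟨⟨(j : ℕ) + 1, by have := j.isLt; omega⟩, ks_succ hn j⟩)

lemma ks0eq1 (hn : 0 < n) : ks hn (i0 n) = ks hn (i1 hn) := rfl



end Det2Aux

namespace Det2Aux

variable {n : ℕ}

private lemma zsum (x y : ZMod 2) (h : x + y = 0) : x = y := by revert x y; decide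

section withD

variable (D : (Fin (n + 1) → Fin n → ZMod 2) → ZMod 2)

lemma LP1
    (hinv : ∀ (A : Matrix (Fin n) (Fin n) (ZMod 2)), IsUnit A.det →
      ∀ k : Fin (n + 1) → Fin n → ZMod 2, D (fun i => A.mulVec (k i)) = D k)
    {a b : Fin (n+1)} (hab : a ≠ b) (k k' : Fin (n+1) → Fin n → ZMod 2)
    (hk : Submodule.span (ZMod 2) (Set.range k) = ⊤)
    (hk' : Submodule.span (ZMod 2) (Set.range k') = ⊤)
    (h1 : k a = k b) (h2 : k' a = k' b) : D k = D k' := by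
  classical
  set lam : Fin (n+1) → ZMod 2 := fun i => if i = a ∨ i = b then 1 else 0 with hlamdef
  have hlam : lam ≠ 0 := by
    intro h
    have := congrFun h a
    simp [hlamdef] at this
  have hsum : ∀ (m : Fin (n+1) → Fin n → ZMod 2) (j : Fin n), m a = m b →
      ∑ i, lam i * m i j = 0 := by
    intro m j hm
    rw [Fintype.sum_eq_add a b hab (fun x ⟨hxa, hxb⟩ => by
      have : ¬(x = a ∨ x = b) := by tauto
      simp [hlamdef, this])]
    have ha1 : lam a = 1 := by simp [hlamdef]
    have hb1 : lam b = 1 := by simp [hlamdef]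
    rw [ha1, hb1, one_mul, one_mul, congrFun hm j, CharTwo.add_self_eq_zero]
  obtain ⟨A, hA, hAk⟩ := exists_mat k k' hk hk' lam hlam
    (fun j => hsum k j h1) (fun j => hsum k' j h2)
  rw [← hinv A hA k]
  congr 1
  funext i
  exact hAk i

lemma LP2
    (hadd : ∀ (k : Fin (n + 1) → Fin n → ZMod 2) (i : Fin (n + 1)) (u v : Fin n → ZMod 2),
      D (Function.update k i (u + v)) = D (Function.update k i u) + D (Function.update k i v))
    (hinv : ∀ (A : Matrix (Fin n) (Fin n) (ZMod 2)), IsUnit A.det →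
      ∀ k : Fin (n + 1) → Fin n → ZMod 2, D (fun i => A.mulVec (k i)) = D k)
    (T : Fin (n+1) → Fin n → ZMod 2) {a b x : Fin (n+1)}
    (hab : a ≠ b) (hxa : x ≠ a) (hxb : x ≠ b)
    (hT : Submodule.span (ZMod 2) (Set.range T) = ⊤) (hTab : T a = T b) :
    D (Function.update T a (T x)) = D (Function.update T b (T x)) := by
  classical
  have hKa := hadd T a (T a) (T x)
  have hKb := hadd T b (T b) (T x)
  rw [Function.update_eq_self] at hKa hKb
  -- spans
  have hKspan : Submodule.span (ZMod 2) (Set.range (Function.update T a (T a + T x))) = ⊤ := by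
    apply spanTrans T _ hT
    intro i
    by_cases hia : i = a
    · subst hia
      have hmem : Function.update T i (T i + T x) i + Function.update T i (T i + T x) x ∈
          Submodule.span (ZMod 2) (Set.range (Function.update T i (T i + T x))) :=
        add_mem (Submodule.subset_span ⟨i, rfl⟩) (Submodule.subset_span ⟨x, rfl⟩)
      rw [Function.update_self, Function.update_of_ne hxa, add_add_self] at hmem
      exact hmem
    · exact Submodule.subset_span ⟨i, Function.update_of_ne hia _ _⟩
  have hK'span : Submodule.span (ZMod 2) (Set.range (Function.update T b (T b + T x))) = ⊤ := by
    apply spanTrans T _ hT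
    intro i
    by_cases hib : i = b
    · subst hib
      have hmem : Function.update T i (T i + T x) i + Function.update T i (T i + T x) x ∈
          Submodule.span (ZMod 2) (Set.range (Function.update T i (T i + T x))) :=
        add_mem (Submodule.subset_span ⟨i, rfl⟩) (Submodule.subset_span ⟨x, rfl⟩)
      rw [Function.update_self, Function.update_of_ne hxb, add_add_self] at hmem
      exact hmem
    · exact Submodule.subset_span ⟨i, Function.update_of_ne hib _ _⟩
  -- relation
  set lam : Fin (n+1) → ZMod 2 := fun i => if i = a ∨ i = b ∨ i = x then 1 else 0 with hlamdef
  have hlam : lam ≠ 0 := by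
    intro h
    have := congrFun h a
    simp [hlamdef] at this
  have hsum3 : ∀ (mt : Fin (n+1) → Fin n → ZMod 2) (j : Fin n),
      ∑ i, lam i * mt i j = mt a j + mt b j + mt x j := by
    intro mt j
    have hss : ({a, b, x} : Finset (Fin (n+1))) ⊆ Finset.univ := Finset.subset_univ _
    rw [← Finset.sum_subset hss (fun i _ hi => by
      have hni : ¬(i = a ∨ i = b ∨ i = x) := by
        simpa [Finset.mem_insert, Finset.mem_singleton] using hi
      simp [hlamdef, hni])]
    rw [Finset.sum_insert (by simp [hab, hxa.symm] : a ∉ ({b, x} : Finset (Fin (n+1)))),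
      Finset.sum_insert (by simp [hxb.symm] : b ∉ ({x} : Finset (Fin (n+1)))),
      Finset.sum_singleton]
    have h1 : lam a = 1 := by simp [hlamdef]
    have h2 : lam b = 1 := by simp [hlamdef]
    have h3 : lam x = 1 := by simp [hlamdef]
    rw [h1, h2, h3, one_mul, one_mul, one_mul, add_assoc]
  have hrelK : ∀ j, ∑ i, lam i * (Function.update T a (T a + T x)) i j = 0 := by
    intro j
    rw [hsum3]
    rw [Function.update_self, Function.update_of_ne hab.symm, Function.update_of_ne hxa]
    have := congrFun hTab j
    show T a j + T x j + T b j + T x j = 0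
    rw [this]
    exact (by decide : ∀ p q : ZMod 2, p + q + p + q = 0) _ _
  have hrelK' : ∀ j, ∑ i, lam i * (Function.update T b (T b + T x)) i j = 0 := by
    intro j
    rw [hsum3]
    rw [Function.update_self, Function.update_of_ne hab, Function.update_of_ne hxb]
    have := congrFun hTab j
    show T a j + (T b j + T x j) + T x j = 0
    rw [this]
    exact (by decide : ∀ p q : ZMod 2, p + (p + q) + q = 0) _ _
  obtain ⟨A, hA, hAk⟩ := exists_mat _ _ hKspan hK'span lam hlam hrelK hrelK'
  have hDKK' : D (Function.update T a (T a + T x)) = D (Function.update T b (T b + T x)) := by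
    rw [← hinv A hA (Function.update T a (T a + T x))]
    congr 1
    funext i
    exact hAk i
  rw [hKa, hKb] at hDKK'
  exact add_left_cancel hDKK'

lemma pairVal (hn : 0 < n)
    (hadd : ∀ (k : Fin (n + 1) → Fin n → ZMod 2) (i : Fin (n + 1)) (u v : Fin n → ZMod 2),
      D (Function.update k i (u + v)) = D (Function.update k i u) + D (Function.update k i v))
    (hinv : ∀ (A : Matrix (Fin n) (Fin n) (ZMod 2)), IsUnit A.det →
      ∀ k : Fin (n + 1) → Fin n → ZMod 2, D (fun i => A.mulVec (k i)) = D k)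
    {a b : Fin (n+1)} (hab : a ≠ b) (k : Fin (n+1) → Fin n → ZMod 2)
    (hk : Submodule.span (ZMod 2) (Set.range k) = ⊤) (hkab : k a = k b) :
    D k = D (ks hn) := by
  classical
  have pair01 : ∀ k1 : Fin (n+1) → Fin n → ZMod 2,
      Submodule.span (ZMod 2) (Set.range k1) = ⊤ → k1 (i0 n) = k1 (i1 hn) →
      D k1 = D (ks hn) :=
    fun k1 hk1 h1 => LP1 D hinv (ne01 hn) k1 (ks hn) hk1 (spanks hn) h1 (ks0eq1 hn)
  have hT0span : ∀ x : Fin (n+1),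
      Submodule.span (ZMod 2)
        (Set.range (Function.update (ks hn) (i0 n) (ks hn x))) = ⊤ := by
    intro x
    apply spanE
    intro j
    exact ⟨⟨(j:ℕ)+1, by have := j.isLt; omega⟩,
      by rw [Function.update_of_ne (succ_ne_i0 j), ks_succ]⟩
  have hstep : ∀ x : Fin (n+1), x ≠ i0 n → x ≠ i1 hn →
      (∀ k1 : Fin (n+1) → Fin n → ZMod 2,
          Submodule.span (ZMod 2) (Set.range k1) = ⊤ → k1 (i1 hn) = k1 x →
          D k1 = D (ks hn)) ∧
      (∀ k1 : Fin (n+1) → Fin n → ZMod 2,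
          Submodule.span (ZMod 2) (Set.range k1) = ⊤ → k1 (i0 n) = k1 x →
          D k1 = D (ks hn)) ∧
      D (Function.update (ks hn) (i0 n) (ks hn x)) = D (ks hn) := by
    intro x hx0 hx1
    have hT0ab : Function.update (ks hn) (i0 n) (ks hn x) (i0 n)
        = Function.update (ks hn) (i0 n) (ks hn x) x := by
      rw [Function.update_self, Function.update_of_ne hx0]
    have step3 := LP2 D hadd hinv (Function.update (ks hn) (i0 n) (ks hn x))
      (a := i0 n) (b := x) (x := i1 hn) hx0.symm (ne01 hn).symm hx1.symm
      (hT0span x) hT0ab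
    have hT01 : Function.update (ks hn) (i0 n) (ks hn x) (i1 hn) = ks hn (i1 hn) :=
      Function.update_of_ne (ne01 hn).symm _ _
    -- the U tuple
    have hUspan : Submodule.span (ZMod 2)
        (Set.range (Function.update (ks hn) (i0 n) (ks hn (i1 hn)))) = ⊤ := hT0span _
    have hDU : D (Function.update (ks hn) (i0 n) (ks hn (i1 hn))) = D (ks hn) :=
      pair01 _ hUspan
        (by rw [Function.update_self, Function.update_of_ne (ne01 hn).symm])
    -- the W tuple
    have hWspan : Submodule.span (ZMod 2)
        (Set.range (Function.update (Function.update (ks hn) (i0 n) (ks hn x)) x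
          (ks hn (i1 hn)))) = ⊤ := by
      apply spanE
      intro j
      by_cases hj : (⟨(j:ℕ)+1, by have := j.isLt; omega⟩ : Fin (n+1)) = x
      · refine ⟨i0 n, ?_⟩
        rw [Function.update_of_ne hx0.symm, Function.update_self, ← hj, ks_succ]
      · exact ⟨⟨(j:ℕ)+1, by have := j.isLt; omega⟩,
          by rw [Function.update_of_ne hj, Function.update_of_ne (succ_ne_i0 j), ks_succ]⟩
    have hDW : D (Function.update (Function.update (ks hn) (i0 n) (ks hn x)) x
        (ks hn (i1 hn))) = D (ks hn) := by
      have e1 : Function.update (Function.update (ks hn) (i0 n) (ks hn x)) (i0 n)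
          (Function.update (ks hn) (i0 n) (ks hn x) (i1 hn))
          = Function.update (ks hn) (i0 n) (ks hn (i1 hn)) := by
        rw [hT01, Function.update_idem]
      have e2 : Function.update (Function.update (ks hn) (i0 n) (ks hn x)) x
          (Function.update (ks hn) (i0 n) (ks hn x) (i1 hn))
          = Function.update (Function.update (ks hn) (i0 n) (ks hn x)) x
            (ks hn (i1 hn)) := by rw [hT01]
      rw [← e2, ← step3, e1, hDU]
    have pair1x : ∀ k1 : Fin (n+1) → Fin n → ZMod 2,
        Submodule.span (ZMod 2) (Set.range k1) = ⊤ → k1 (i1 hn) = k1 x →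
        D k1 = D (ks hn) := by
      intro k1 hk1 h1
      have hW1x : Function.update (Function.update (ks hn) (i0 n) (ks hn x)) x
            (ks hn (i1 hn)) (i1 hn)
          = Function.update (Function.update (ks hn) (i0 n) (ks hn x)) x
            (ks hn (i1 hn)) x := by
        rw [Function.update_self, Function.update_of_ne hx1.symm, hT01]
      exact (LP1 D hinv hx1.symm k1 _ hk1 hWspan h1 hW1x).trans hDW
    have hDT1 : D (Function.update (ks hn) (i1 hn) (ks hn x)) = D (ks hn) := by
      apply pair1x
      · apply spanE
        intro j
        by_cases hj0 : j = ⟨0, hn⟩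
        · refine ⟨i0 n, ?_⟩
          rw [Function.update_of_ne (ne01 hn), ks_i0, hj0]
        · have hjv : (j : ℕ) ≠ 0 := fun h => hj0 (Fin.ext h)
          refine ⟨⟨(j:ℕ)+1, by have := j.isLt; omega⟩, ?_⟩
          have hne : (⟨(j:ℕ)+1, by have := j.isLt; omega⟩ : Fin (n+1)) ≠ i1 hn := by
            intro h
            have := congrArg Fin.val h
            simp only [i1] at this
            omega
          rw [Function.update_of_ne hne, ks_succ]
      · rw [Function.update_self, Function.update_of_ne hx1]
    have step2 := LP2 D hadd hinv (ks hn) (a := i0 n) (b := i1 hn) (x := x)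
      (ne01 hn) hx0 hx1 (spanks hn) (ks0eq1 hn)
    have hDT0 : D (Function.update (ks hn) (i0 n) (ks hn x)) = D (ks hn) :=
      step2.trans hDT1
    have pair0x : ∀ k1 : Fin (n+1) → Fin n → ZMod 2,
        Submodule.span (ZMod 2) (Set.range k1) = ⊤ → k1 (i0 n) = k1 x →
        D k1 = D (ks hn) := by
      intro k1 hk1 h1
      exact (LP1 D hinv hx0.symm k1 _ hk1 (hT0span x) h1 hT0ab).trans hDT0
    exact ⟨pair1x, pair0x, hDT0⟩
  -- final case analysis
  by_cases ha0 : a = i0 n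
  · subst ha0
    by_cases hb1 : b = i1 hn
    · subst hb1; exact pair01 k hk hkab
    · exact (hstep b hab.symm hb1).2.1 k hk hkab
  by_cases ha1 : a = i1 hn
  · subst ha1
    by_cases hb0 : b = i0 n
    · subst hb0; exact pair01 k hk hkab.symm
    · exact (hstep b hb0 hab.symm).1 k hk hkab
  by_cases hb0 : b = i0 n
  · subst hb0; exact (hstep a ha0 ha1).2.1 k hk hkab.symm
  by_cases hb1 : b = i1 hn
  · subst hb1; exact (hstep a ha0 ha1).1 k hk hkab.symm
  · -- both outside {i0, i1}
    obtain ⟨-, pair0b, hDT0b⟩ := hstep b hb0 hb1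
    have step := LP2 D hadd hinv (Function.update (ks hn) (i0 n) (ks hn a))
      (a := i0 n) (b := a) (x := b) (Ne.symm ha0) hb0 hab.symm (hT0span a)
      (by rw [Function.update_self, Function.update_of_ne ha0])
    have hT0ab : Function.update (ks hn) (i0 n) (ks hn a) b = ks hn b :=
      Function.update_of_ne hb0 _ _
    have eLHS : Function.update (Function.update (ks hn) (i0 n) (ks hn a)) (i0 n)
        (Function.update (ks hn) (i0 n) (ks hn a) b)
        = Function.update (ks hn) (i0 n) (ks hn b) := by
      rw [hT0ab, Function.update_idem]
    have hW'span : Submodule.span (ZMod 2)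
        (Set.range (Function.update (Function.update (ks hn) (i0 n) (ks hn a)) a
          (Function.update (ks hn) (i0 n) (ks hn a) b))) = ⊤ := by
      apply spanE
      intro j
      by_cases hj : (⟨(j:ℕ)+1, by have := j.isLt; omega⟩ : Fin (n+1)) = a
      · refine ⟨i0 n, ?_⟩
        rw [Function.update_of_ne (Ne.symm ha0), Function.update_self, ← hj, ks_succ]
      · exact ⟨⟨(j:ℕ)+1, by have := j.isLt; omega⟩,
          by rw [Function.update_of_ne hj, Function.update_of_ne (succ_ne_i0 j), ks_succ]⟩
    have hW'ab : Function.update (Function.update (ks hn) (i0 n) (ks hn a)) a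
          (Function.update (ks hn) (i0 n) (ks hn a) b) a
        = Function.update (Function.update (ks hn) (i0 n) (ks hn a)) a
          (Function.update (ks hn) (i0 n) (ks hn a) b) b := by
      rw [Function.update_self, Function.update_of_ne hab.symm, hT0ab]
    have hDW' : D (Function.update (Function.update (ks hn) (i0 n) (ks hn a)) a
        (Function.update (ks hn) (i0 n) (ks hn a) b)) = D (ks hn) := by
      rw [← step, eLHS, hDT0b]
    exact (LP1 D hinv hab k _ hk hW'span hkab hW'ab).trans hDW'

lemma sum_eq_card (lam : Fin (n+1) → ZMod 2) :
    ∑ i, lam i = ((Finset.univ.filter (fun i => lam i = 1)).card : ZMod 2) := by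
  classical
  have h1 : ∑ i, lam i = ∑ i ∈ Finset.univ.filter (fun i => lam i = 1), lam i := by
    refine (Finset.sum_subset (Finset.filter_subset _ _) ?_).symm
    intro i _ hi
    rcases zmod2_cases (lam i) with h | h
    · exact h
    · exact absurd (Finset.mem_filter.2 ⟨Finset.mem_univ i, h⟩) hi
  rw [h1, Finset.sum_congr rfl (fun i hi => (Finset.mem_filter.1 hi).2),
    Finset.sum_const, nsmul_eq_mul, mul_one]

lemma main_eval (hn : 0 < n)
    (hadd : ∀ (k : Fin (n + 1) → Fin n → ZMod 2) (i : Fin (n + 1)) (u v : Fin n → ZMod 2),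
      D (Function.update k i (u + v)) = D (Function.update k i u) + D (Function.update k i v))
    (hsmul : ∀ (k : Fin (n + 1) → Fin n → ZMod 2) (i : Fin (n + 1)) (c : ZMod 2)
      (u : Fin n → ZMod 2),
      D (Function.update k i (c • u)) = c * D (Function.update k i u))
    (hinv : ∀ (A : Matrix (Fin n) (Fin n) (ZMod 2)), IsUnit A.det →
      ∀ k : Fin (n + 1) → Fin n → ZMod 2, D (fun i => A.mulVec (k i)) = D k) :
    ∀ (m : ℕ) (k : Fin (n+1) → Fin n → ZMod 2) (lam : Fin (n+1) → ZMod 2),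
      Submodule.span (ZMod 2) (Set.range k) = ⊤ → lam ≠ 0 →
      (∀ j, ∑ i, lam i * k i j = 0) →
      (Finset.univ.filter (fun i => lam i = 1)).card = m →
      D k = ((m : ZMod 2) + 1) * D (ks hn) := by
  classical
  intro m
  induction m using Nat.strong_induction_on with
  | _ m IH =>
  intro k lam hk hlam hrel hcard
  have hoff : ∀ i : Fin (n+1), lam i ≠ 1 → lam i = 0 :=
    fun i h => (zmod2_cases (lam i)).resolve_right h
  rcases Nat.lt_or_ge m 3 with hm | hm
  · interval_cases m
    · -- m = 0 : lam = 0, contradiction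
      exfalso
      apply hlam
      funext i
      rcases zmod2_cases (lam i) with h | h
      · exact h
      · exact absurd (Finset.card_eq_zero.1 hcard ▸
          Finset.mem_filter.2 ⟨Finset.mem_univ i, h⟩) (Finset.notMem_empty i)
    · -- m = 1 : k a = 0
      obtain ⟨a, ha⟩ := Finset.card_eq_one.1 hcard
      have hlama : lam a = 1 := by
        have hmem : a ∈ Finset.univ.filter (fun i => lam i = 1) := by
          rw [ha]; exact Finset.mem_singleton_self a
        exact (Finset.mem_filter.1 hmem).2
      have hoffa : ∀ i, i ≠ a → lam i = 0 := by
        intro i hi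
        apply hoff
        intro h1
        have hmem : i ∈ Finset.univ.filter (fun i => lam i = 1) :=
          Finset.mem_filter.2 ⟨Finset.mem_univ i, h1⟩
        rw [ha] at hmem
        exact hi (Finset.mem_singleton.1 hmem)
      have hka : k a = 0 := by
        funext j
        have h := hrel j
        rw [Finset.sum_eq_single a (fun i _ hi => by rw [hoffa i hi, zero_mul])
          (fun h => absurd (Finset.mem_univ a) h), hlama, one_mul] at h
        exact h
      have hDk : D k = 0 := by
        have hupd : k = Function.update k a 0 := by rw [← hka, Function.update_eq_self]
        have h0 := hsmul k a 0 0
        rw [zero_smul] at h0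
        rw [hupd, h0, zero_mul]
      rw [hDk, (by decide : ((1:ℕ) : ZMod 2) + 1 = 0), zero_mul]
    · -- m = 2 : pair
      obtain ⟨a, b, hab, hs2⟩ := Finset.card_eq_two.1 hcard
      have hlama : lam a = 1 := by
        have : a ∈ Finset.univ.filter (fun i => lam i = 1) := by
          rw [hs2]; exact Finset.mem_insert_self a _
        exact (Finset.mem_filter.1 this).2
      have hlamb : lam b = 1 := by
        have : b ∈ Finset.univ.filter (fun i => lam i = 1) := by
          rw [hs2]; exact Finset.mem_insert_of_mem (Finset.mem_singleton_self b)
        exact (Finset.mem_filter.1 this).2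
      have hkab : k a = k b := by
        funext j
        have h := hrel j
        rw [Fintype.sum_eq_add a b hab (fun x ⟨hxa, hxb⟩ => by
          have : lam x = 0 := by
            apply hoff
            intro h1
            have : x ∈ Finset.univ.filter (fun i => lam i = 1) :=
              Finset.mem_filter.2 ⟨Finset.mem_univ x, h1⟩
            rw [hs2] at this
            rcases Finset.mem_insert.1 this with h2 | h2
            · exact hxa h2
            · exact hxb (Finset.mem_singleton.1 h2)
          rw [this, zero_mul]), hlama, hlamb, one_mul, one_mul] at h
        exact zsum _ _ h
      rw [pairVal D hn hadd hinv hab k hk hkab,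
        (by decide : ((2:ℕ) : ZMod 2) + 1 = 1), one_mul]
  · -- m ≥ 3
    have h1lt : 1 < (Finset.univ.filter (fun i => lam i = 1)).card := by omega
    obtain ⟨a, haS, b, hbS, hab⟩ := Finset.one_lt_card.1 h1lt
    have hlama : lam a = 1 := (Finset.mem_filter.1 haS).2
    have hlamb : lam b = 1 := (Finset.mem_filter.1 hbS).2
    -- the modified relation lam'
    have hlam' : (fun i => if i = b then (0:ZMod 2) else lam i) ≠ 0 := by
      intro h
      have := congrFun h a
      simp only [if_neg hab] at this
      rw [hlama] at this
      exact one_ne_zero this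
    have hfilter' : Finset.univ.filter (fun i => (if i = b then (0:ZMod 2) else lam i) = 1)
        = (Finset.univ.filter (fun i => lam i = 1)).erase b := by
      ext i
      simp only [Finset.mem_filter, Finset.mem_erase, Finset.mem_univ, true_and]
      by_cases hib : i = b
      · subst hib
        constructor
        · intro h
          rw [if_pos rfl] at h
          exact absurd h (by decide)
        · rintro ⟨h, -⟩
          exact absurd rfl h
      · simp only [if_neg hib]
        tauto
    have hcard' : (Finset.univ.filter
        (fun i => (if i = b then (0:ZMod 2) else lam i) = 1)).card = m - 1 := by
      rw [hfilter', Finset.card_erase_of_mem hbS, hcard]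
    -- relation for k'
    have hrel' : ∀ j, ∑ i, (if i = b then (0:ZMod 2) else lam i) *
        (Function.update k a (k a + k b)) i j = 0 := by
      intro j
      have key : ∀ i : Fin (n+1), (if i = b then (0:ZMod 2) else lam i) *
          (Function.update k a (k a + k b)) i j
          = lam i * k i j + (if i = a then k b j else 0) + (if i = b then k b j else 0) := by
        intro i
        by_cases hia : i = a
        · subst hia
          rw [if_neg hab, if_pos rfl, if_neg hab, Function.update_self, hlama]
          show 1 * (k i j + k b j) = 1 * k i j + k b j + 0
          ring
        · by_cases hib : i = b
          · subst hib
            rw [if_pos rfl, if_neg hia, if_pos rfl, Function.update_of_ne (Ne.symm hab),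
              hlamb]
            exact (by decide : ∀ p : ZMod 2, 0 * p = 1 * p + 0 + p) _
          · rw [if_neg hib, if_neg hia, if_neg hib, Function.update_of_ne hia]
            ring
      rw [Finset.sum_congr rfl (fun i _ => key i), Finset.sum_add_distrib,
        Finset.sum_add_distrib, hrel j, Finset.sum_ite_eq' Finset.univ a (fun _ => k b j),
        Finset.sum_ite_eq' Finset.univ b (fun _ => k b j),
        if_pos (Finset.mem_univ a), if_pos (Finset.mem_univ b), zero_add,
        CharTwo.add_self_eq_zero]
    -- span of k'
    have hk'span : Submodule.span (ZMod 2)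
        (Set.range (Function.update k a (k a + k b))) = ⊤ := by
      apply spanTrans k _ hk
      intro i
      by_cases hia : i = a
      · subst hia
        have hmem : Function.update k i (k i + k b) i + Function.update k i (k i + k b) b ∈
            Submodule.span (ZMod 2) (Set.range (Function.update k i (k i + k b))) :=
          add_mem (Submodule.subset_span ⟨i, rfl⟩) (Submodule.subset_span ⟨b, rfl⟩)
        rw [Function.update_self, Function.update_of_ne (Ne.symm hab), add_add_self] at hmem
        exact hmem
      · exact Submodule.subset_span ⟨i, Function.update_of_ne hia _ _⟩
    -- span of k''
    have hka_mem : k a = ∑ i ∈ (Finset.univ.filter (fun i => lam i = 1)).erase a, k i := by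
      funext j
      rw [Finset.sum_apply]
      have hS : ∑ i ∈ Finset.univ.filter (fun i => lam i = 1), k i j = 0 := by
        have h2 : ∑ i, lam i * k i j
            = ∑ i ∈ Finset.univ.filter (fun i => lam i = 1), lam i * k i j := by
          refine (Finset.sum_subset (Finset.filter_subset _ _) ?_).symm
          intro i _ hi
          have : lam i = 0 := hoff i (fun h1 =>
            hi (Finset.mem_filter.2 ⟨Finset.mem_univ i, h1⟩))
          rw [this, zero_mul]
        have h3 := hrel j
        rw [h2] at h3
        have h5 : ∑ i ∈ Finset.univ.filter (fun i => lam i = 1), k i j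
            = ∑ i ∈ Finset.univ.filter (fun i => lam i = 1), lam i * k i j :=
          Finset.sum_congr rfl (fun i hi => by
            rw [(Finset.mem_filter.1 hi).2, one_mul])
        rw [h5]
        exact h3
      have h4 := Finset.sum_erase_add
        (Finset.univ.filter (fun i => lam i = 1)) (fun i => k i j) haS
      rw [hS] at h4
      exact (zsum _ _ h4).symm
    have hk''span : Submodule.span (ZMod 2)
        (Set.range (Function.update k a (k b))) = ⊤ := by
      apply spanTrans k _ hk
      intro i
      by_cases hia : i = a
      · subst hia
        rw [hka_mem]
        refine Submodule.sum_mem _ (fun l hl => ?_)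
        exact Submodule.subset_span
          ⟨l, Function.update_of_ne (Finset.ne_of_mem_erase hl) _ _⟩
      · exact Submodule.subset_span ⟨i, Function.update_of_ne hia _ _⟩
    have hDk'' : D (Function.update k a (k b)) = D (ks hn) := by
      apply pairVal D hn hadd hinv hab _ hk''span
      rw [Function.update_self, Function.update_of_ne (Ne.symm hab)]
    have hDk' : D (Function.update k a (k a + k b))
        = (((m - 1 : ℕ) : ZMod 2) + 1) * D (ks hn) :=
      IH (m-1) (by omega) _ _ hk'span hlam' hrel' hcard'
    have hsplit := hadd k a (k a) (k b)
    rw [Function.update_eq_self] at hsplit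
    have hDk : D k = D (Function.update k a (k a + k b))
        + D (Function.update k a (k b)) := by
      rw [hsplit, add_assoc, CharTwo.add_self_eq_zero, add_zero]
    rw [hDk, hDk', hDk'']
    have hc : ((m - 1 : ℕ) : ZMod 2) = (m : ZMod 2) + 1 := by
      rw [Nat.cast_sub (by omega : 1 ≤ m), sub_eq_add_neg, Nat.cast_one,
        (by decide : (-1 : ZMod 2) = 1)]
    rw [hc, add_assoc, (by decide : (1:ZMod 2) + 1 = 0), add_zero, add_mul, one_mul]

end withD

end Det2Aux


/-- `det₂` is the unique nonzero multilinear `GL_n(F₂)`-invariant function of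
`n+1` vectors in `F₂ⁿ` that vanishes on tuples of rank `< n`. -/
theorem det2_unique (n : ℕ) (D : (Fin (n + 1) → Fin n → ZMod 2) → ZMod 2)
    (hvanish : ∀ k : Fin (n + 1) → Fin n → ZMod 2,
      Module.finrank (ZMod 2) (Submodule.span (ZMod 2) (Set.range k)) < n → D k = 0)
    (hadd : ∀ (k : Fin (n + 1) → Fin n → ZMod 2) (i : Fin (n + 1)) (u v : Fin n → ZMod 2),
      D (Function.update k i (u + v)) = D (Function.update k i u) + D (Function.update k i v))
    (hsmul : ∀ (k : Fin (n + 1) → Fin n → ZMod 2) (i : Fin (n + 1)) (c : ZMod 2)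
      (u : Fin n → ZMod 2),
      D (Function.update k i (c • u)) = c * D (Function.update k i u))
    (hinv : ∀ (A : Matrix (Fin n) (Fin n) (ZMod 2)), IsUnit A.det →
      ∀ k : Fin (n + 1) → Fin n → ZMod 2, D (fun i => A.mulVec (k i)) = D k)
    (hne : D ≠ 0) :
    D = det2 n := by
  classical
  rcases Nat.eq_zero_or_pos n with hn0 | hn
  · exfalso
    apply hne
    funext k
    have hupd : k = Function.update k ⟨0, by omega⟩ 0 := by
      funext i j
      exact absurd j.isLt (by omega)
    have h0 := hsmul k ⟨0, by omega⟩ 0 0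
    rw [zero_smul] at h0
    show D k = 0
    rw [hupd, h0, zero_mul]
  · funext k
    by_cases hr : Module.finrank (ZMod 2) (Submodule.span (ZMod 2) (Set.range k)) = n
    · have hktop := (Det2Aux.finrank_span_iff k).1 hr
      obtain ⟨lam, hlam, hrel⟩ := Det2Aux.exists_rel k
      have hcond : Module.finrank (ZMod 2) (Submodule.span (ZMod 2) (Set.range k)) = n ∧
          ∃ lam : Fin (n + 1) → ZMod 2, lam ≠ 0 ∧ ∀ j, ∑ i, lam i * k i j = 0 :=
        ⟨hr, lam, hlam, hrel⟩
      show D k = det2 n k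
      unfold det2
      rw [dif_pos hcond]
      have hch := hcond.2.choose_spec
      have hchoose : hcond.2.choose = lam :=
        Det2Aux.rel_unique k hktop _ lam hch.1 hlam hch.2 hrel
      obtain ⟨k0, hk0⟩ : ∃ k0, D k0 ≠ 0 := by
        by_contra h
        push_neg at h
        exact hne (funext fun k0 => h k0)
      have hr0 : Module.finrank (ZMod 2) (Submodule.span (ZMod 2) (Set.range k0)) = n := by
        by_contra h
        exact hk0 (hvanish k0 (lt_of_le_of_ne (Det2Aux.rank_le k0) h))
      obtain ⟨lam0, hlam0, hrel0⟩ := Det2Aux.exists_rel k0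
      have hv0 := Det2Aux.main_eval D hn hadd hsmul hinv _ k0 lam0
        ((Det2Aux.finrank_span_iff k0).1 hr0) hlam0 hrel0 rfl
      have hc1 : D (Det2Aux.ks hn) = 1 := by
        rcases Det2Aux.zmod2_cases (D (Det2Aux.ks hn)) with h | h
        · exfalso; apply hk0; rw [hv0, h, mul_zero]
        · exact h
      have hDk := Det2Aux.main_eval D hn hadd hsmul hinv _ k lam hktop hlam hrel rfl
      rw [hDk, hc1, mul_one, hchoose, Det2Aux.sum_eq_card lam]
    · show D k = det2 n k
      unfold det2
      rw [dif_neg (fun h => hr h.1)]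
      exact hvanish k (lt_of_le_of_ne (Det2Aux.rank_le k) hr)
end

section
/- Let k₁,...,k_{n+1} ∈ F₂ⁿ be vectors such that for some m < n the subspace spanned by k₁,...,k_{m+1} has dimension m, and let π : F₂ⁿ → F₂ⁿ/span(k₁,...,k_{m+1}) ≅ F₂^{n−m} be the quotient projection. Then det₂(k₁,...,k_{n+1}) = det₂(k₁,...,k_{m+1}) · det(π(k_{m+2}),...,π(k_{n+1})), where the first factor is the 2-determinant of m+1 vectors in the m-dimensional space span(k₁,...,k_{m+1}) and the second is the ordinary determinant over F₂ of n−m vectors in F₂^{n−m}. -/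
private lemma det2_sum_split {M : Type*} [AddCommMonoid M] {n m : ℕ}
    (hmn : m + 1 ≤ n + 1) (hr : ∀ r : Fin (n - m), m + 1 + (r : ℕ) < n + 1)
    (h : (m + 1) + (n - m) = n + 1) (f : Fin (n + 1) → M) :
    ∑ i, f i = ∑ i : Fin (m + 1), f (Fin.castLE hmn i)
      + ∑ r : Fin (n - m), f ⟨m + 1 + (r : ℕ), hr r⟩ := by
  rw [← Equiv.sum_comp (finCongr h) f, Fin.sum_univ_add]
  all_goals
    refine congrArg₂ (· + ·) ?_ ?_ <;>
      exact Finset.sum_congr rfl fun i _ => congrArg f (by ext; simp)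

private def det2Ext {n m : ℕ} (lam : Fin (m + 1) → ZMod 2) : Fin (n + 1) → ZMod 2 :=
  fun i => if h : (i : ℕ) < m + 1 then lam ⟨i, h⟩ else 0

private lemma det2_block_work (n m : ℕ) (hm : m < n) (hmn : m + 1 ≤ n + 1)
    (hr : ∀ r : Fin (n - m), m + 1 + (r : ℕ) < n + 1)
    (k : Fin (n + 1) → Fin n → ZMod 2)
    (K : Fin (m + 1) → Fin n → ZMod 2) (hK : ∀ i, K i = k (Fin.castLE hmn i))
    (W : Submodule (ZMod 2) (Fin n → ZMod 2))
    (hW : W = Submodule.span (ZMod 2) (Set.range K))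
    (hrank : Module.finrank (ZMod 2) W = m)
    (lam : Fin (m + 1) → ZMod 2) (hlam : lam ≠ 0)
    (hrel : ∀ j, ∑ i, lam i * K i j = 0)
    (b : Module.Basis (Fin (n - m)) (ZMod 2) ((Fin n → ZMod 2) ⧸ W))
    (v : Fin (n - m) → (Fin n → ZMod 2) ⧸ W)
    (hv : ∀ r, v r = Submodule.Quotient.mk (k ⟨m + 1 + (r : ℕ), hr r⟩)) :
    det2 n k = ((∑ i, lam i) + 1) *
      Matrix.det (Matrix.of fun (r c : Fin (n - m)) => b.repr (v r) c) := by
  classical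
  have hMeq : (Matrix.of fun (r c : Fin (n - m)) => b.repr (v r) c)
      = (b.toMatrix v).transpose := rfl
  rw [hMeq, Matrix.det_transpose, ← Module.Basis.det_apply]
  have hsplitnum : (m + 1) + (n - m) = n + 1 := by omega
  have h01 : ∀ x : ZMod 2, x = 0 ∨ x = 1 := by decide
  have hfinV : Module.finrank (ZMod 2) (Fin n → ZMod 2) = n := by
    simp [Module.finrank_fintype_fun_eq_card]
  have hmkQ : ∀ i : Fin (m + 1), W.mkQ (K i) = 0 := by
    intro i
    rw [Submodule.mkQ_apply, Submodule.Quotient.mk_eq_zero, hW]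
    exact Submodule.subset_span ⟨i, rfl⟩
  by_cases hdet : IsUnit (b.det v)
  · obtain ⟨hind, hspan⟩ := (Module.Basis.is_basis_iff_det b).mpr hdet
    have hWle : W ≤ Submodule.span (ZMod 2) (Set.range k) := by
      rw [hW]
      refine Submodule.span_le.mpr ?_
      rintro _ ⟨i, rfl⟩
      rw [hK i]
      exact Submodule.subset_span ⟨_, rfl⟩
    have hmap : Submodule.map W.mkQ (Submodule.span (ZMod 2) (Set.range k)) = ⊤ := by
      rw [eq_top_iff, ← hspan]
      refine Submodule.span_le.mpr ?_
      rintro _ ⟨r, rfl⟩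
      rw [hv r, ← Submodule.mkQ_apply]
      exact ⟨_, Submodule.subset_span ⟨_, rfl⟩, rfl⟩
    have htop : Submodule.span (ZMod 2) (Set.range k) = ⊤ := by
      have h2 := (Submodule.map_mkQ_eq_top _ _).mp hmap
      rwa [sup_eq_right.mpr hWle] at h2
    have hrk : Module.finrank (ZMod 2)
        (Submodule.span (ZMod 2) (Set.range k)) = n := by
      rw [htop, finrank_top, hfinV]
    -- the extended relation
    have hlam'c : ∀ i : Fin (m + 1),
        (det2Ext (n := n) lam)
          (Fin.castLE hmn i) = lam i := by
      intro i
      simp [det2Ext, i.isLt]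
    have hlam't : ∀ r : Fin (n - m),
        (det2Ext (n := n) lam)
          ⟨m + 1 + (r : ℕ), hr r⟩ = 0 := by
      intro r
      have hlt : ¬ (m + 1 + (r : ℕ) < m + 1) := by omega
      simp [det2Ext, hlt]
    have hlam'ne : (det2Ext (n := n) lam) ≠ 0 := by
      obtain ⟨i, hi⟩ := Function.ne_iff.mp hlam
      intro h0
      apply hi
      rw [← hlam'c i, h0]
      rfl
    have hrel' : ∀ j, ∑ i, (det2Ext (n := n) lam) i * k i j = 0 := by
      intro j
      rw [det2_sum_split hmn hr hsplitnum]
      have h1 : ∑ i : Fin (m + 1),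
          (det2Ext (n := n) lam)
            (Fin.castLE hmn i) * k (Fin.castLE hmn i) j = 0 := by
        have he : ∑ i : Fin (m + 1),
            (det2Ext (n := n) lam) (Fin.castLE hmn i) * k (Fin.castLE hmn i) j
            = ∑ i : Fin (m + 1), lam i * K i j :=
          Finset.sum_congr rfl fun i _ => by rw [hlam'c i, hK i]
        rw [he, hrel j]
      have h2 : ∑ r : Fin (n - m),
          (det2Ext (n := n) lam)
            ⟨m + 1 + (r : ℕ), hr r⟩ * k ⟨m + 1 + (r : ℕ), hr r⟩ j = 0 :=
        Finset.sum_eq_zero fun r _ => by rw [hlam't r, zero_mul]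
      rw [h1, h2, add_zero]
    have hcond : Module.finrank (ZMod 2)
        (Submodule.span (ZMod 2) (Set.range k)) = n ∧
        ∃ mu : Fin (n + 1) → ZMod 2, mu ≠ 0 ∧ ∀ j, ∑ i, mu i * k i j = 0 :=
      ⟨hrk, _, hlam'ne, hrel'⟩
    rw [det2, dif_pos hcond]
    have hdet1 : b.det v = 1 := by
      rcases h01 (b.det v) with h | h
      · exact absurd h hdet.ne_zero
      · exact h
    rw [hdet1, mul_one]
    -- analyse the chosen relation
    obtain ⟨hμne, hμrel⟩ := hcond.2.choose_spec
    set μ : Fin (n + 1) → ZMod 2 := hcond.2.choose with hμdef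
    have hvec : ∑ i, μ i • k i = 0 := by
      ext j
      have := hμrel j
      simpa [Finset.sum_apply] using this
    have hq1 : ∑ i, μ i • W.mkQ (k i) = 0 := by
      have : ∑ i, μ i • W.mkQ (k i) = W.mkQ (∑ i, μ i • k i) := by
        rw [map_sum]
        exact Finset.sum_congr rfl fun i _ => by rw [map_smul]
      rw [this, hvec, map_zero]
    rw [det2_sum_split hmn hr hsplitnum] at hq1
    have h2 : ∑ i : Fin (m + 1),
        μ (Fin.castLE hmn i) • W.mkQ (k (Fin.castLE hmn i)) = 0 :=
      Finset.sum_eq_zero fun i _ => by rw [← hK i, hmkQ i, smul_zero]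
    rw [h2, zero_add] at hq1
    have hq0 : ∑ r : Fin (n - m), μ ⟨m + 1 + (r : ℕ), hr r⟩ • v r = 0 := by
      rw [← hq1]
      exact Finset.sum_congr rfl fun r _ => by rw [hv r, Submodule.mkQ_apply]
    have htail : ∀ r : Fin (n - m), μ ⟨m + 1 + (r : ℕ), hr r⟩ = 0 :=
      Fintype.linearIndependent_iff.mp hind _ hq0
    -- the restriction of μ is a nonzero relation among the first m+1 vectors
    have hμ'rel : ∀ j, ∑ i : Fin (m + 1), μ (Fin.castLE hmn i) * K i j = 0 := by
      intro j
      have hj := hμrel j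
      rw [det2_sum_split hmn hr hsplitnum] at hj
      have ht : ∑ r : Fin (n - m),
          μ ⟨m + 1 + (r : ℕ), hr r⟩ * k ⟨m + 1 + (r : ℕ), hr r⟩ j = 0 :=
        Finset.sum_eq_zero fun r _ => by rw [htail r, zero_mul]
      rw [ht, add_zero] at hj
      rw [← hj]
      exact Finset.sum_congr rfl fun i _ => by rw [hK i]
    have hμ'ne : (fun i : Fin (m + 1) => μ (Fin.castLE hmn i)) ≠ 0 := by
      intro h0
      apply hμne
      funext i
      by_cases hi : (i : ℕ) < m + 1
      · have he : Fin.castLE hmn ⟨(i : ℕ), hi⟩ = i := Fin.ext rfl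
        have := congrFun h0 ⟨(i : ℕ), hi⟩
        simpa [he] using this
      · have hi2 : (i : ℕ) - (m + 1) < n - m := by omega
        have he : i = ⟨m + 1 + (((⟨(i : ℕ) - (m + 1), hi2⟩ : Fin (n - m)) : ℕ)),
            hr ⟨(i : ℕ) - (m + 1), hi2⟩⟩ := by
          apply Fin.ext
          show (i : ℕ) = m + 1 + ((i : ℕ) - (m + 1))
          omega
        rw [he]
        exact htail _
    -- kernel of the linear-combination map is spanned by lam
    have hLc : ∀ c : Fin (m + 1) → ZMod 2,
        Fintype.linearCombination (ZMod 2) K c = 0 ↔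
          ∀ j, ∑ i, c i * K i j = 0 := by
      intro c
      rw [Fintype.linearCombination_apply]
      constructor
      · intro h j
        have := congrFun h j
        simpa [Finset.sum_apply] using this
      · intro h
        ext j
        simpa [Finset.sum_apply] using h j
    have hker1 : Module.finrank (ZMod 2)
        (LinearMap.ker (Fintype.linearCombination (ZMod 2) K)) = 1 := by
      have hrn := LinearMap.finrank_range_add_finrank_ker
        (Fintype.linearCombination (ZMod 2) K)
      rw [Fintype.range_linearCombination, ← hW, hrank,
        Module.finrank_fintype_fun_eq_card, Fintype.card_fin] at hrn
      omega
    have hlamker : lam ∈ LinearMap.ker (Fintype.linearCombination (ZMod 2) K) :=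
      LinearMap.mem_ker.mpr ((hLc lam).mpr hrel)
    have hkerspan : LinearMap.ker (Fintype.linearCombination (ZMod 2) K)
        = Submodule.span (ZMod 2) {lam} := by
      symm
      apply Submodule.eq_of_le_of_finrank_eq
      · exact Submodule.span_le.mpr (by simpa using hlamker)
      · rw [finrank_span_singleton hlam, hker1]
    have hμ'mem : (fun i : Fin (m + 1) => μ (Fin.castLE hmn i)) ∈
        LinearMap.ker (Fintype.linearCombination (ZMod 2) K) :=
      LinearMap.mem_ker.mpr ((hLc _).mpr hμ'rel)
    rw [hkerspan, Submodule.mem_span_singleton] at hμ'mem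
    obtain ⟨c, hc⟩ := hμ'mem
    have hμ'eq : (fun i : Fin (m + 1) => μ (Fin.castLE hmn i)) = lam := by
      rcases h01 c with h | h
      · rw [h, zero_smul] at hc
        exact absurd hc.symm hμ'ne
      · rw [h, one_smul] at hc
        exact hc.symm
    have hsum : ∑ i, μ i = ∑ i, lam i := by
      rw [det2_sum_split hmn hr hsplitnum μ]
      have ht : ∑ r : Fin (n - m), μ ⟨m + 1 + (r : ℕ), hr r⟩ = 0 :=
        Finset.sum_eq_zero fun r _ => htail r
      rw [ht, add_zero]
      exact Finset.sum_congr rfl fun i _ => congrFun hμ'eq i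
    rw [hsum]
  · have hd0 : b.det v = 0 := by
      rcases h01 (b.det v) with h | h
      · exact h
      · exact absurd (h ▸ isUnit_one) hdet
    rw [hd0, mul_zero, det2, dif_neg]
    rintro ⟨hrk, -⟩
    apply hdet
    have htop : Submodule.span (ZMod 2) (Set.range k) = ⊤ :=
      Submodule.eq_top_of_finrank_eq (by rw [hrk, hfinV])
    have hq : Module.finrank (ZMod 2) ((Fin n → ZMod 2) ⧸ W) = n - m := by
      rw [Module.finrank_eq_card_basis b, Fintype.card_fin]
    have hspan : ⊤ ≤ Submodule.span (ZMod 2) (Set.range v) := by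
      have h1 : Submodule.map W.mkQ (Submodule.span (ZMod 2) (Set.range k)) = ⊤ := by
        rw [htop, Submodule.map_top, Submodule.range_mkQ]
      rw [← h1, Submodule.map_span]
      refine Submodule.span_le.mpr ?_
      rintro _ ⟨_, ⟨i, rfl⟩, rfl⟩
      by_cases hi : (i : ℕ) < m + 1
      · have he : k i = K ⟨(i : ℕ), hi⟩ := by
          rw [hK ⟨(i : ℕ), hi⟩]
          congr 1
        rw [he, hmkQ]
        exact Submodule.zero_mem _
      · have hi2 : (i : ℕ) - (m + 1) < n - m := by omega
        have hidx : (⟨m + 1 + (((⟨(i : ℕ) - (m + 1), hi2⟩ : Fin (n - m)) : ℕ)),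
            hr ⟨(i : ℕ) - (m + 1), hi2⟩⟩ : Fin (n + 1)) = i := by
          apply Fin.ext
          show m + 1 + ((i : ℕ) - (m + 1)) = (i : ℕ)
          omega
        have he : W.mkQ (k i) = v ⟨(i : ℕ) - (m + 1), hi2⟩ := by
          rw [hv, Submodule.mkQ_apply, hidx]
        rw [he]
        exact Submodule.subset_span ⟨_, rfl⟩
    have hcard : Fintype.card (Fin (n - m)) =
        Module.finrank (ZMod 2) ((Fin n → ZMod 2) ⧸ W) := by
      rw [hq, Fintype.card_fin]
    have hind := linearIndependent_of_top_le_span_of_card_eq_finrank hspan hcard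
    exact (Module.Basis.is_basis_iff_det b).mp ⟨hind, top_le_iff.mp hspan⟩

/-- upper triangular block formula for `det₂`. If the first `m+1` of the vectors
`k₁,…,k_{n+1} ∈ F₂ⁿ` span an `m`-dimensional subspace (`m < n`), with unique nonzero relation
`∑ λᵢ kᵢ = 0`, then `det₂(k₁,…,k_{n+1})` equals the 2-determinant of the first `m+1` vectors
(i.e. `∑ λᵢ + 1`) times the ordinary `F₂`-determinant of the images of the remaining `n-m`
vectors in the quotient `F₂ⁿ / span(k₁,…,k_{m+1})`, computed in any basis `b` of the quotient. -/
theorem det2_block (n m : ℕ) (hm : m < n) (k : Fin (n + 1) → Fin n → ZMod 2)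
    (hrank : Module.finrank (ZMod 2) (Submodule.span (ZMod 2)
      (Set.range (fun i : Fin (m + 1) => k (Fin.castLE (by omega) i)))) = m)
    (lam : Fin (m + 1) → ZMod 2) (hlam : lam ≠ 0)
    (hrel : ∀ j, ∑ i : Fin (m + 1), lam i * k (Fin.castLE (by omega) i) j = 0)
    (b : Module.Basis (Fin (n - m)) (ZMod 2) ((Fin n → ZMod 2) ⧸ Submodule.span (ZMod 2)
      (Set.range (fun i : Fin (m + 1) => k (Fin.castLE (by omega) i))))) :
    det2 n k = ((∑ i, lam i) + 1) *
      Matrix.det (Matrix.of fun (r c : Fin (n - m)) =>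
        b.repr (Submodule.Quotient.mk (k ⟨m + 1 + (r : ℕ), by omega⟩)) c) := by
  have hmn : m + 1 ≤ n + 1 := by omega
  have hr : ∀ r : Fin (n - m), m + 1 + (r : ℕ) < n + 1 := fun r => by omega
  have key := det2_block_work n m hm hmn hr k
    (fun i => k (Fin.castLE hmn i)) (fun _ => rfl)
    (Submodule.span (ZMod 2) (Set.range (fun i : Fin (m + 1) => k (Fin.castLE hmn i)))) rfl
    hrank lam hlam hrel b
    (fun r => Submodule.Quotient.mk (k ⟨m + 1 + (r : ℕ), hr r⟩)) (fun _ => rfl)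
  exact key
end

section
/- Let V be an n×n integer matrix with nonzero determinant, and let f_i(x) = x^{v_i} + 1 for i = 1,...,n, where v_i ∈ ℤⁿ is the i-th row of V and x^{v_i} denotes the Laurent monomial x₁^{v_{i,1}}···x_n^{v_{i,n}}. Then for any a ∈ ℤⁿ, the product of x^a over all |det V| common solutions x ∈ (ℂ∖0)ⁿ of f₁(x) = ... = f_n(x) = 0 equals (−1)^{det₂(v̄₁,...,v̄_n, ā)}, where v̄ᵢ, ā denote reductions mod 2 in F₂ⁿ and det₂ is the 2-determinant of n+1 vectors in F₂ⁿ. -/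
lemma det2_eq_zero_of_lt {n : ℕ} {k : Fin (n + 1) → Fin n → ZMod 2}
    (h : Module.finrank (ZMod 2) (Submodule.span (ZMod 2) (Set.range k)) < n) :
    det2 n k = 0 := by
  rw [det2, dif_neg]
  rintro ⟨h1, -⟩
  exact absurd h1 h.ne

lemma det2_eq_of {n : ℕ} {k : Fin (n + 1) → Fin n → ZMod 2}
    (hrank : Module.finrank (ZMod 2) (Submodule.span (ZMod 2) (Set.range k)) = n)
    {lam : Fin (n + 1) → ZMod 2} (hlam : lam ≠ 0)
    (hrel : ∀ j, ∑ i, lam i * k i j = 0) :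
    det2 n k = (∑ i, lam i) + 1 := by
  have h : Module.finrank (ZMod 2) (Submodule.span (ZMod 2) (Set.range k)) = n ∧
      ∃ lam : Fin (n + 1) → ZMod 2, lam ≠ 0 ∧ ∀ j, ∑ i, lam i * k i j = 0 :=
    ⟨hrank, lam, hlam, hrel⟩
  rw [det2, dif_pos h]
  obtain ⟨hch1, hch2⟩ := h.2.choose_spec
  suffices hu : h.2.choose = lam by rw [hu]
  -- both are nonzero elements of the kernel of vecMulLinear, which has dim 1
  set L := (Matrix.of k).vecMulLinear with hL
  have hmem : ∀ mu : Fin (n + 1) → ZMod 2, (∀ j, ∑ i, mu i * k i j = 0) →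
      mu ∈ LinearMap.ker L := by
    intro mu hmu
    rw [LinearMap.mem_ker, hL]
    ext j
    simpa [Matrix.vecMulLinear_apply, Matrix.vecMul, dotProduct] using hmu j
  have hrange : LinearMap.range L = Submodule.span (ZMod 2) (Set.range k) := by
    rw [hL, range_vecMulLinear]; rfl
  have hker : Module.finrank (ZMod 2) (LinearMap.ker L) = 1 := by
    have := LinearMap.finrank_range_add_finrank_ker L
    rw [hrange, hrank, Module.finrank_pi, Fintype.card_fin] at this
    omega
  obtain ⟨bk⟩ := (finrank_eq_one_iff (Fin 1)).mp hker
  have hone : ∀ c : ZMod 2, c ≠ 0 → c = 1 := by decide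
  have key : ∀ mu : Fin (n + 1) → ZMod 2, mu ≠ 0 → (∀ j, ∑ i, mu i * k i j = 0) →
      mu = (bk 0 : Fin (n + 1) → ZMod 2) := by
    intro mu hmu0 hmu
    have hm : (⟨mu, hmem mu hmu⟩ : LinearMap.ker L) = bk.repr ⟨mu, hmem mu hmu⟩ 0 • bk 0 := by
      have h2 := bk.sum_repr ⟨mu, hmem mu hmu⟩
      rw [Fin.sum_univ_one] at h2
      exact h2.symm
    have hc : bk.repr ⟨mu, hmem mu hmu⟩ 0 ≠ 0 := by
      intro hc0
      rw [hc0, zero_smul] at hm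
      exact hmu0 (by simpa using congrArg Subtype.val hm)
    rw [hone _ hc, one_smul] at hm
    exact congrArg Subtype.val hm
  rw [key _ hch1 hch2, key _ hlam hrel]

open Polynomial

lemma roots_finset (D : ℕ) (hD : 0 < D) (e : ℂˣ) :
    ∃ Rf : Finset ℂˣ, (∀ z : ℂˣ, z ∈ Rf ↔ z ^ D = e) ∧ Rf.card = D ∧
      ∏ z ∈ Rf, z = (-1 : ℂˣ) ^ (D + 1) * e := by
  classical
  set a : ℂ := (e : ℂ) with ha_def
  have ha : a ≠ 0 := e.ne_zero
  set p : ℂ[X] := X ^ D - C a with hp_def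
  have hp0 : p ≠ 0 := X_pow_sub_C_ne_zero hD a
  have hmonic : p.Monic := monic_X_pow_sub_C a hD.ne'
  have hsplit : p.Splits := IsAlgClosed.splits p
  have hdeg : p.natDegree = D := natDegree_X_pow_sub_C
  have hcard : Multiset.card p.roots = D := by
    rw [splits_iff_card_roots.mp hsplit, hdeg]
  have hsep : p.Separable := separable_X_pow_sub_C a (by
    simp only [Nat.cast_ne_zero]; exact hD.ne') ha
  have hnodup : p.roots.Nodup := nodup_roots hsep
  set W : Finset ℂ := p.roots.toFinset with hW_def
  have hWmem : ∀ w : ℂ, w ∈ W ↔ w ^ D = a := by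
    intro w
    rw [hW_def, Multiset.mem_toFinset, mem_roots hp0]
    simp [IsRoot, hp_def, sub_eq_zero]
  have hWcard : W.card = D := by
    rw [hW_def, Multiset.toFinset_card_of_nodup hnodup, hcard]
  have hWprod : ∏ w ∈ W, w = (-1 : ℂ) ^ (D + 1) * a := by
    have h1 : ∏ w ∈ W, w = p.roots.prod := by
      rw [Finset.prod_eq_multiset_prod, hW_def, Multiset.toFinset_val,
        Multiset.dedup_eq_self.mpr hnodup, Multiset.map_id']
    have h2 : p.coeff 0 = (-1 : ℂ) ^ D * p.roots.prod := by
      have := hsplit.coeff_zero_eq_prod_roots_of_monic hmonic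
      rwa [hdeg] at this
    have h3 : p.coeff 0 = -a := by
      simp [hp_def, coeff_X_pow, hD.ne', (Ne.symm hD.ne')]
    have h4 : (-1 : ℂ) ^ D * ((-1 : ℂ) ^ (D + 1) * a) = -a := by
      rw [← mul_assoc, ← pow_add, show D + (D + 1) = 2 * D + 1 by ring, pow_succ, pow_mul]
      simp
    have h5 : (-1 : ℂ) ^ D ≠ 0 := pow_ne_zero _ (by norm_num)
    have h6 : (-1 : ℂ) ^ D * p.roots.prod = (-1 : ℂ) ^ D * ((-1 : ℂ) ^ (D + 1) * a) := by
      rw [h4, ← h3, h2]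
    rw [h1]
    exact mul_left_cancel₀ h5 h6
  refine ⟨W.preimage (fun z : ℂˣ => (z : ℂ)) Units.val_injective.injOn, ?_, ?_, ?_⟩
  · intro z
    rw [Finset.mem_preimage, hWmem]
    rw [← Units.val_pow_eq_pow_val]
    exact ⟨fun h => Units.ext h, fun h => congrArg Units.val h⟩
  · have himg : (W.preimage (fun z : ℂˣ => (z : ℂ)) Units.val_injective.injOn).image
        (fun z : ℂˣ => (z : ℂ)) = W := by
      ext w
      simp only [Finset.mem_image, Finset.mem_preimage]
      constructor
      · rintro ⟨z, hz, rfl⟩; exact hz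
      · intro hw
        have hw0 : w ≠ 0 := by
          intro h0
          rw [hWmem] at hw
          exact ha (by rw [← hw, h0, zero_pow hD.ne'])
        exact ⟨Units.mk0 w hw0, by simpa using hw, rfl⟩
    calc (W.preimage (fun z : ℂˣ => (z : ℂ)) Units.val_injective.injOn).card
        = ((W.preimage (fun z : ℂˣ => (z : ℂ)) Units.val_injective.injOn).image
            (fun z : ℂˣ => (z : ℂ))).card := (Finset.card_image_of_injective _ Units.val_injective).symm
      _ = D := by rw [himg, hWcard]
  · apply Units.ext
    push_cast [Units.coeHom]
    have himg : (W.preimage (fun z : ℂˣ => (z : ℂ)) Units.val_injective.injOn).image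
        (fun z : ℂˣ => (z : ℂ)) = W := by
      ext w
      simp only [Finset.mem_image, Finset.mem_preimage]
      constructor
      · rintro ⟨z, hz, rfl⟩; exact hz
      · intro hw
        have hw0 : w ≠ 0 := by
          intro h0
          rw [hWmem] at hw
          exact ha (by rw [← hw, h0, zero_pow hD.ne'])
        exact ⟨Units.mk0 w hw0, by simpa using hw, rfl⟩
    have := Finset.prod_image (f := fun w : ℂ => w)
      (g := fun z : ℂˣ => (z : ℂ)) (s := W.preimage (fun z : ℂˣ => (z : ℂ)) Units.val_injective.injOn)
      (fun x _ y _ h => Units.ext h)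
    rw [himg, hWprod] at this
    rw [← this]


lemma piFinset_prod_eval {n : ℕ} (R : Fin n → Finset ℂˣ) (hne : ∀ j, (R j).Nonempty)
    (i : Fin n) (c : ℤ) :
    ∏ y ∈ Fintype.piFinset R, (y i) ^ c =
      ((∏ z ∈ R i, z) ^ c) ^ ∏ j, (if j = i then 1 else (R j).card) := by
  classical
  have h0 : ∏ y ∈ Fintype.piFinset R, (y i) ^ c =
      ∏ b ∈ (Fintype.piFinset R).image (fun y : Fin n → ℂˣ => y i),
        (b ^ c) ^ ((Fintype.piFinset R).filter (fun y : Fin n → ℂˣ => y i = b)).card :=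
    Finset.prod_comp (fun z : ℂˣ => z ^ c) (fun y : Fin n → ℂˣ => y i)
  rw [h0]
  have himg : (Fintype.piFinset R).image (fun y : Fin n → ℂˣ => y i) = R i := by
    ext z
    simp only [Finset.mem_image, Fintype.mem_piFinset]
    constructor
    · rintro ⟨y, hy, rfl⟩; exact hy i
    · intro hz
      refine ⟨Function.update (fun j => (hne j).choose) i z, fun j => ?_, by simp⟩
      by_cases h : j = i
      · subst h; simpa using hz
      · rw [Function.update_of_ne h]; exact (hne j).choose_spec
  have hfil : ∀ z ∈ R i, (Finset.filter (fun y : Fin n → ℂˣ => y i = z) (Fintype.piFinset R)).card =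
      ∏ j, (if j = i then 1 else (R j).card) := by
    intro z hz
    have hset : Finset.filter (fun y : Fin n → ℂˣ => y i = z) (Fintype.piFinset R) =
        Fintype.piFinset (Function.update R i {z}) := by
      ext y
      simp only [Finset.mem_filter, Fintype.mem_piFinset]
      constructor
      · rintro ⟨hy, hyi⟩ j
        by_cases h : j = i
        · subst h; simp [hyi]
        · rw [Function.update_of_ne h]; exact hy j
      · intro hy
        refine ⟨fun j => ?_, ?_⟩
        · by_cases h : j = i
          · subst h
            have := hy j; simp only [Function.update_self, Finset.mem_singleton] at this
            rw [this]; exact hz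
          · have := hy j; rwa [Function.update_of_ne h] at this
        · have := hy i; simpa using this
    rw [hset, Fintype.card_piFinset]
    refine Finset.prod_congr rfl fun j _ => ?_
    by_cases h : j = i
    · subst h; simp
    · rw [Function.update_of_ne h]; simp [h]
  rw [himg]
  rw [Finset.prod_congr rfl (fun z hz => by rw [hfil z hz])]
  rw [Finset.prod_pow, Finset.prod_zpow]

lemma zmod_side {n : ℕ} (b : Module.Basis (Fin n) ℤ (Fin n → ℤ)) (d : Fin n → ℤ)
    (v : Fin n → Fin n → ℤ) (a : Fin n → ℤ) (MM AM : Matrix (Fin n) (Fin n) ℤ)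
    (hd : ∀ i, 0 < d i)
    (hvA : ∀ i l, b.repr (v i) l = AM i l * d l)
    (hMv : ∀ k, (d k) • b k = ∑ j, MM k j • v j)
    (hMA : MM * AM = 1) :
    ((∑ i, (d i + 1 + (∑ j, MM i j)) * b.repr a i *
        ((∏ j, if j = i then 1 else (d j).toNat : ℕ) : ℤ) : ℤ) : ZMod 2) =
      det2 n (Fin.snoc (fun i j => ((v i j : ℤ) : ZMod 2))
        (fun j => ((a j : ℤ) : ZMod 2))) := by
  classical
  -- the reduction map
  set r : (Fin n → ℤ) →ₗ[ℤ] (Fin n → ZMod 2) :=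
    { toFun := fun w j => ((w j : ℤ) : ZMod 2)
      map_add' := by intro w w'; funext j; simp only [Pi.add_apply]; push_cast; ring
      map_smul' := by
        intro t w; funext j
        simp only [Pi.smul_apply, smul_eq_mul, RingHom.id_apply]
        rw [← Int.cast_smul_eq_zsmul (ZMod 2) t (((w j : ℤ) : ZMod 2)), smul_eq_mul]
        push_cast; ring } with hr_def
  have hr_apply : ∀ w j, r w j = ((w j : ℤ) : ZMod 2) := fun w j => rfl
  have hzsmul : ∀ (t : ℤ) (w : Fin n → ZMod 2), t • w = ((t : ZMod 2)) • w := by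
    intro t w; rw [Int.cast_smul_eq_zsmul]
  have hcoord : ∀ w : Fin n → ℤ,
      r w = ∑ l, ((b.repr w l : ℤ) : ZMod 2) • r (b l) := by
    intro w
    conv_lhs => rw [← b.sum_repr w]
    rw [map_sum]
    refine Finset.sum_congr rfl fun l _ => ?_
    rw [map_smul, hzsmul]
  have hcardeq : Fintype.card (Fin n) = Module.finrank (ZMod 2) (Fin n → ZMod 2) := by
    rw [Module.finrank_pi, Fintype.card_fin]
  have htople : ⊤ ≤ Submodule.span (ZMod 2) (Set.range (fun l => r (b l))) := by
    intro w _
    have hw : w = r (fun j => ((w j).val : ℤ)) := by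
      funext j
      rw [hr_apply]
      push_cast
      exact (ZMod.natCast_rightInverse (w j)).symm
    rw [hw, hcoord]
    exact Submodule.sum_mem _ fun l _ =>
      Submodule.smul_mem _ _ (Submodule.subset_span (Set.mem_range_self l))
  set k : Fin (n + 1) → Fin n → ZMod 2 :=
    Fin.snoc (fun i j => ((v i j : ℤ) : ZMod 2)) (fun j => ((a j : ℤ) : ZMod 2)) with hk_def
  have hk_cast : ∀ i : Fin n, k i.castSucc = r (v i) := by
    intro i; rw [hk_def]; ext j; rw [Fin.snoc_castSucc]; rfl
  have hk_last : k (Fin.last n) = r a := by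
    rw [hk_def]; ext j; rw [Fin.snoc_last]; rfl
  have hvmem : ∀ i, r (v i) ∈ Submodule.span (ZMod 2) (Set.range k) :=
    fun i => Submodule.subset_span ⟨i.castSucc, hk_cast i⟩
  have hamem : r a ∈ Submodule.span (ZMod 2) (Set.range k) :=
    Submodule.subset_span ⟨Fin.last n, hk_last⟩
  -- mod 2 structural relations
  have hvbar : ∀ i, r (v i) = ∑ l, ((AM i l : ZMod 2) * ((d l : ℤ) : ZMod 2)) • r (b l) := by
    intro i
    rw [hcoord (v i)]
    refine Finset.sum_congr rfl fun l _ => ?_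
    rw [hvA i l]; push_cast; rfl
  have hMvbar : ∀ m, ∑ j, ((MM m j : ZMod 2)) • r (v j) = ((d m : ℤ) : ZMod 2) • r (b m) := by
    intro m
    have h1 := congrArg r (hMv m)
    rw [map_smul, hzsmul, map_sum] at h1
    rw [h1]
    refine Finset.sum_congr rfl fun j _ => ?_
    rw [map_smul, hzsmul]
  have hM2A2 : (MM.map (Int.cast : ℤ → ZMod 2)) * (AM.map (Int.cast : ℤ → ZMod 2)) = 1 := by
    have h2 : (MM * AM).map ((Int.castRingHom (ZMod 2)) : ℤ → ZMod 2) =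
        MM.map (Int.cast : ℤ → ZMod 2) * AM.map (Int.cast : ℤ → ZMod 2) := Matrix.map_mul
    rw [← h2, hMA]
    ext i j
    simp [Matrix.one_apply, apply_ite]
  have hrowM : ∀ m, ¬ (∀ j, ((MM m j : ZMod 2)) = 0) := by
    intro m hrow
    have h1 : ((MM.map (Int.cast : ℤ → ZMod 2)) * (AM.map (Int.cast : ℤ → ZMod 2))) m m = 1 := by
      rw [hM2A2]; simp [Matrix.one_apply]
    rw [Matrix.mul_apply] at h1
    simp only [Matrix.map_apply] at h1
    rw [Finset.sum_eq_zero (fun j _ => by rw [hrow j, zero_mul])] at h1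
    exact one_ne_zero h1.symm
  have hzm : ∀ x : ZMod 2, x = 0 ∨ x = 1 := by decide
  have h2z : (1 + 1 : ZMod 2) = 0 := by decide
  have hxx : ∀ x : Fin n → ZMod 2, x + x = 0 := by
    intro x; funext j
    simp only [Pi.add_apply, Pi.zero_apply]
    exact CharTwo.add_self_eq_zero _
  have hdt : ∀ j, (((d j).toNat : ℕ) : ZMod 2) = ((d j : ℤ) : ZMod 2) := by
    intro j
    rw [← Int.cast_natCast, Int.toNat_of_nonneg (hd j).le]
  have hLHS : ((∑ i, (d i + 1 + (∑ j, MM i j)) * b.repr a i *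
        ((∏ j, if j = i then 1 else (d j).toNat : ℕ) : ℤ) : ℤ) : ZMod 2) =
      ∑ i, (((d i : ℤ) : ZMod 2) + 1 + ((∑ j, MM i j : ℤ) : ZMod 2)) *
        ((b.repr a i : ℤ) : ZMod 2) * ∏ j, (if j = i then 1 else ((d j : ℤ) : ZMod 2)) := by
    rw [Int.cast_sum]
    refine Finset.sum_congr rfl fun i _ => ?_
    rw [Int.cast_mul, Int.cast_mul, Int.cast_add, Int.cast_add, Int.cast_one,
      Int.cast_natCast, Nat.cast_prod]
    congr 1
    refine Finset.prod_congr rfl fun j _ => ?_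
    split_ifs
    · norm_num
    · exact hdt j
  rw [hLHS]
  by_cases hall : ∀ l, ((d l : ℤ) : ZMod 2) = 1
  · -- Case A: all dᵢ odd
    have hPi : ∀ i : Fin n, (∏ j, if j = i then (1 : ZMod 2) else ((d j : ℤ) : ZMod 2)) = 1 := by
      intro i
      apply Finset.prod_eq_one
      intro j _
      split_ifs with h
      · rfl
      · exact hall j
    set lam : Fin (n + 1) → ZMod 2 :=
      Fin.snoc (fun j => ∑ l, ((b.repr a l : ℤ) : ZMod 2) * ((MM l j : ZMod 2))) 1 with hlam_def
    have hlam0 : lam ≠ 0 := by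
      intro h0
      have h1 := congrFun h0 (Fin.last n)
      rw [hlam_def] at h1
      rw [Fin.snoc_last] at h1
      exact one_ne_zero h1
    have hvec : ∑ j, (∑ l, ((b.repr a l : ℤ) : ZMod 2) * ((MM l j : ZMod 2))) • r (v j) = r a := by
      have h1 : ∑ j, (∑ l, ((b.repr a l : ℤ) : ZMod 2) * ((MM l j : ZMod 2))) • r (v j)
          = ∑ l, ((b.repr a l : ℤ) : ZMod 2) • (∑ j, ((MM l j : ZMod 2)) • r (v j)) :=
        calc ∑ j, (∑ l, ((b.repr a l : ℤ) : ZMod 2) * ((MM l j : ZMod 2))) • r (v j)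
            = ∑ j, ∑ l, (((b.repr a l : ℤ) : ZMod 2) * ((MM l j : ZMod 2))) • r (v j) :=
              Finset.sum_congr rfl fun j _ => Finset.sum_smul
          _ = ∑ l, ∑ j, (((b.repr a l : ℤ) : ZMod 2) * ((MM l j : ZMod 2))) • r (v j) :=
              Finset.sum_comm
          _ = ∑ l, ((b.repr a l : ℤ) : ZMod 2) • (∑ j, ((MM l j : ZMod 2)) • r (v j)) :=
              Finset.sum_congr rfl fun l _ => by
                rw [Finset.smul_sum]
                exact Finset.sum_congr rfl fun j _ => (mul_smul _ _ _)
      rw [h1]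
      rw [hcoord a]
      refine Finset.sum_congr rfl fun l _ => ?_
      rw [hMvbar l, hall l, one_smul]
    have hrel : ∀ jj, ∑ i, lam i * k i jj = 0 := by
      intro jj
      rw [Fin.sum_univ_castSucc]
      simp only [hlam_def, Fin.snoc_castSucc, Fin.snoc_last, one_mul]
      have h2 := congrFun hvec jj
      simp only [Finset.sum_apply, Pi.smul_apply, smul_eq_mul] at h2
      rw [hk_last]
      calc (∑ j : Fin n, (∑ l, ((b.repr a l : ℤ) : ZMod 2) * ((MM l j : ZMod 2))) * k j.castSucc jj)
            + r a jj
          = (∑ j : Fin n, (∑ l, ((b.repr a l : ℤ) : ZMod 2) * ((MM l j : ZMod 2))) * r (v j) jj)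
            + r a jj := by
            congr 1
            exact Finset.sum_congr rfl fun j _ => by rw [hk_cast j]
        _ = r a jj + r a jj := by rw [h2]
        _ = 0 := by rw [CharTwo.add_self_eq_zero]
    have hspan : Submodule.span (ZMod 2) (Set.range k) = ⊤ := by
      rw [eq_top_iff]
      refine le_trans htople ?_
      rw [Submodule.span_le]
      rintro _ ⟨l, rfl⟩
      have h3 : r (b l) = ∑ j, ((MM l j : ZMod 2)) • r (v j) := by
        rw [hMvbar l, hall l, one_smul]
      show r (b l) ∈ Submodule.span (ZMod 2) (Set.range k)
      rw [h3]
      exact Submodule.sum_mem _ fun j _ => Submodule.smul_mem _ _ (hvmem j)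
    have hrank : Module.finrank (ZMod 2) (Submodule.span (ZMod 2) (Set.range k)) = n := by
      rw [hspan, finrank_top, Module.finrank_pi, Fintype.card_fin]
    rw [det2_eq_of hrank hlam0 hrel]
    rw [Fin.sum_univ_castSucc]
    simp only [hlam_def, Fin.snoc_castSucc, Fin.snoc_last]
    rw [add_assoc, h2z, add_zero]
    have hre : ∑ j : Fin n, ∑ l, ((b.repr a l : ℤ) : ZMod 2) * ((MM l j : ZMod 2))
        = ∑ l, (((d l : ℤ) : ZMod 2) + 1 + ((∑ j, MM l j : ℤ) : ZMod 2)) *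
            ((b.repr a l : ℤ) : ZMod 2) * ∏ j, (if j = l then 1 else ((d j : ℤ) : ZMod 2)) := by
      rw [Finset.sum_comm]
      refine Finset.sum_congr rfl fun l _ => ?_
      rw [hPi l, mul_one, hall l, h2z, zero_add, ← Finset.mul_sum, Int.cast_sum, mul_comm]
    exact hre.symm
  · -- Case B: some dᵢ even
    push_neg at hall
    obtain ⟨i0, hi0ne⟩ := hall
    have hd0 : ((d i0 : ℤ) : ZMod 2) = 0 := (hzm _).resolve_right hi0ne
    by_cases hB1 : ∃ i1, i1 ≠ i0 ∧ ((d i1 : ℤ) : ZMod 2) = 0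
    · -- at least two even entries
      obtain ⟨i1, hne10, hd1⟩ := hB1
      have hT0 : ∑ i, (((d i : ℤ) : ZMod 2) + 1 + ((∑ j, MM i j : ℤ) : ZMod 2)) *
          ((b.repr a i : ℤ) : ZMod 2) * ∏ j, (if j = i then 1 else ((d j : ℤ) : ZMod 2)) = 0 := by
        refine Finset.sum_eq_zero fun i _ => ?_
        rcases eq_or_ne i i0 with rfl | hni
        · have hp0 : (∏ j, if j = i then (1 : ZMod 2) else ((d j : ℤ) : ZMod 2)) = 0 :=
            Finset.prod_eq_zero (Finset.mem_univ i1) (by rw [if_neg hne10]; exact hd1)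
          rw [hp0, mul_zero]
        · have hp0 : (∏ j, if j = i then (1 : ZMod 2) else ((d j : ℤ) : ZMod 2)) = 0 :=
            Finset.prod_eq_zero (Finset.mem_univ i0) (by rw [if_neg (Ne.symm hni)]; exact hd0)
          rw [hp0, mul_zero]
      rw [hT0]
      set sF : Finset (Fin n → ZMod 2) :=
        insert (r a) ((((Finset.univ.erase i0).erase i1)).image (fun l => r (b l))) with hsF
      have hksub : Submodule.span (ZMod 2) (Set.range k) ≤
          Submodule.span (ZMod 2) (sF : Set (Fin n → ZMod 2)) := by
        rw [Submodule.span_le]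
        rintro _ ⟨idx, rfl⟩
        show k idx ∈ Submodule.span (ZMod 2) (sF : Set (Fin n → ZMod 2))
        refine Fin.lastCases ?_ ?_ idx
        · rw [hk_last]
          exact Submodule.subset_span (by simp [hsF])
        · intro i
          rw [hk_cast i, hvbar i]
          refine Submodule.sum_mem _ fun l _ => ?_
          rcases eq_or_ne l i0 with rfl | h0
          · rw [hd0, mul_zero, zero_smul]; exact Submodule.zero_mem _
          rcases eq_or_ne l i1 with rfl | h1
          · rw [hd1, mul_zero, zero_smul]; exact Submodule.zero_mem _
          · refine Submodule.smul_mem _ _ (Submodule.subset_span ?_)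
            simp only [hsF, Finset.coe_insert, Set.mem_insert_iff, Finset.coe_image,
              Set.mem_image, Finset.mem_coe, Finset.mem_erase]
            exact Or.inr ⟨l, ⟨⟨h1, h0, Finset.mem_univ l⟩, rfl⟩⟩
      have hc2 : ((Finset.univ.erase i0).erase i1).card = n - 2 := by
        rw [Finset.card_erase_of_mem (Finset.mem_erase.mpr ⟨hne10, Finset.mem_univ i1⟩),
          Finset.card_erase_of_mem (Finset.mem_univ i0), Finset.card_univ, Fintype.card_fin]
        omega
      have hn2 : 2 ≤ n := by
        have hnt : Nontrivial (Fin n) := ⟨⟨i1, i0, hne10⟩⟩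
        have := Fintype.one_lt_card (α := Fin n)
        rwa [Fintype.card_fin] at this
      have hcardlt : sF.card < n := by
        have h4 := Finset.card_insert_le (r a)
          ((((Finset.univ.erase i0).erase i1)).image (fun l => r (b l)))
        have h5 := Finset.card_image_le (s := ((Finset.univ.erase i0).erase i1))
          (f := fun l => r (b l))
        rw [hc2] at h5
        rw [hsF]
        omega
      have h6 : Module.finrank (ZMod 2)
          (Submodule.span (ZMod 2) (sF : Set (Fin n → ZMod 2))) ≤ sF.card :=
        finrank_span_finset_le_card sF
      rw [det2_eq_zero_of_lt (lt_of_le_of_lt (le_trans (Submodule.finrank_mono hksub) h6) hcardlt)]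
    · -- exactly one even entry, at i0
      push_neg at hB1
      have hB2 : ∀ l, l ≠ i0 → ((d l : ℤ) : ZMod 2) = 1 := fun l hl =>
        (hzm _).resolve_left (hB1 l hl)
      by_cases hb0 : ((b.repr a i0 : ℤ) : ZMod 2) = 0
      · -- a-coefficient at i0 is even
        have hT0 : ∑ i, (((d i : ℤ) : ZMod 2) + 1 + ((∑ j, MM i j : ℤ) : ZMod 2)) *
            ((b.repr a i : ℤ) : ZMod 2) * ∏ j, (if j = i then 1 else ((d j : ℤ) : ZMod 2)) = 0 := by
          refine Finset.sum_eq_zero fun i _ => ?_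
          rcases eq_or_ne i i0 with rfl | hni
          · rw [hb0, mul_zero, zero_mul]
          · have hp0 : (∏ j, if j = i then (1 : ZMod 2) else ((d j : ℤ) : ZMod 2)) = 0 :=
              Finset.prod_eq_zero (Finset.mem_univ i0) (by rw [if_neg (Ne.symm hni)]; exact hd0)
            rw [hp0, mul_zero]
        rw [hT0]
        set sF : Finset (Fin n → ZMod 2) :=
          (Finset.univ.erase i0).image (fun l => r (b l)) with hsF
        have hksub : Submodule.span (ZMod 2) (Set.range k) ≤
            Submodule.span (ZMod 2) (sF : Set (Fin n → ZMod 2)) := by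
          rw [Submodule.span_le]
          rintro _ ⟨idx, rfl⟩
          show k idx ∈ Submodule.span (ZMod 2) (sF : Set (Fin n → ZMod 2))
          refine Fin.lastCases ?_ ?_ idx
          · rw [hk_last, hcoord a]
            refine Submodule.sum_mem _ fun l _ => ?_
            rcases eq_or_ne l i0 with rfl | h0
            · rw [hb0, zero_smul]; exact Submodule.zero_mem _
            · refine Submodule.smul_mem _ _ (Submodule.subset_span ?_)
              simp only [hsF, Finset.coe_image, Set.mem_image, Finset.mem_coe, Finset.mem_erase]
              exact ⟨l, ⟨h0, Finset.mem_univ l⟩, rfl⟩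
          · intro i
            rw [hk_cast i, hvbar i]
            refine Submodule.sum_mem _ fun l _ => ?_
            rcases eq_or_ne l i0 with rfl | h0
            · rw [hd0, mul_zero, zero_smul]; exact Submodule.zero_mem _
            · refine Submodule.smul_mem _ _ (Submodule.subset_span ?_)
              simp only [hsF, Finset.coe_image, Set.mem_image, Finset.mem_coe, Finset.mem_erase]
              exact ⟨l, ⟨h0, Finset.mem_univ l⟩, rfl⟩
        have hcardlt : sF.card < n := by
          have h5 := Finset.card_image_le (s := Finset.univ.erase i0) (f := fun l => r (b l))
          rw [Finset.card_erase_of_mem (Finset.mem_univ i0), Finset.card_univ,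
            Fintype.card_fin] at h5
          have hn1 : 1 ≤ n := i0.pos
          rw [hsF]
          omega
        have h6 : Module.finrank (ZMod 2)
            (Submodule.span (ZMod 2) (sF : Set (Fin n → ZMod 2))) ≤ sF.card :=
          finrank_span_finset_le_card sF
        rw [det2_eq_zero_of_lt
          (lt_of_le_of_lt (le_trans (Submodule.finrank_mono hksub) h6) hcardlt)]
      · -- a-coefficient at i0 is odd: nontrivial value
        have hb1 : ((b.repr a i0 : ℤ) : ZMod 2) = 1 := (hzm _).resolve_left hb0
        have hT : ∑ i, (((d i : ℤ) : ZMod 2) + 1 + ((∑ j, MM i j : ℤ) : ZMod 2)) *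
            ((b.repr a i : ℤ) : ZMod 2) * ∏ j, (if j = i then 1 else ((d j : ℤ) : ZMod 2)) =
            1 + ((∑ j, MM i0 j : ℤ) : ZMod 2) := by
          rw [Finset.sum_eq_single i0]
          · have hp1 : (∏ j, if j = i0 then (1 : ZMod 2) else ((d j : ℤ) : ZMod 2)) = 1 :=
              Finset.prod_eq_one fun j _ => by
                split_ifs with h
                · rfl
                · exact hB2 j h
            rw [hp1, mul_one, hb1, mul_one, hd0, zero_add]
          · intro i _ hni
            have hp0 : (∏ j, if j = i then (1 : ZMod 2) else ((d j : ℤ) : ZMod 2)) = 0 :=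
              Finset.prod_eq_zero (Finset.mem_univ i0) (by rw [if_neg (Ne.symm hni)]; exact hd0)
            rw [hp0, mul_zero]
          · intro h; exact absurd (Finset.mem_univ i0) h
        rw [hT]
        set lam : Fin (n + 1) → ZMod 2 :=
          Fin.snoc (fun j => ((MM i0 j : ZMod 2))) 0 with hlam_def
        have hlam0 : lam ≠ 0 := by
          intro h0
          refine hrowM i0 fun j => ?_
          have h1 := congrFun h0 j.castSucc
          rw [hlam_def] at h1
          rw [Fin.snoc_castSucc] at h1
          exact h1
        have hvec0 : ∑ j, ((MM i0 j : ZMod 2)) • r (v j) = 0 := by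
          rw [hMvbar i0, hd0, zero_smul]
        have hrel : ∀ jj, ∑ i, lam i * k i jj = 0 := by
          intro jj
          rw [Fin.sum_univ_castSucc]
          simp only [hlam_def, Fin.snoc_castSucc, Fin.snoc_last, zero_mul, add_zero]
          have h2 := congrFun hvec0 jj
          simp only [Finset.sum_apply, Pi.smul_apply, smul_eq_mul, Pi.zero_apply] at h2
          calc ∑ j : Fin n, ((MM i0 j : ZMod 2)) * k j.castSucc jj
              = ∑ j : Fin n, ((MM i0 j : ZMod 2)) * r (v j) jj :=
                Finset.sum_congr rfl fun j _ => by rw [hk_cast j]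
            _ = 0 := h2
        have hmem1 : ∀ l, l ≠ i0 → r (b l) ∈ Submodule.span (ZMod 2) (Set.range k) := by
          intro l hl
          have h3 : r (b l) = ∑ j, ((MM l j : ZMod 2)) • r (v j) := by
            rw [hMvbar l, hB2 l hl, one_smul]
          rw [h3]
          exact Submodule.sum_mem _ fun j _ => Submodule.smul_mem _ _ (hvmem j)
        have hmem0 : r (b i0) ∈ Submodule.span (ZMod 2) (Set.range k) := by
          have hra : r a = r (b i0) +
              ∑ l ∈ Finset.univ.erase i0, ((b.repr a l : ℤ) : ZMod 2) • r (b l) := by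
            rw [hcoord a, ← Finset.add_sum_erase _ _ (Finset.mem_univ i0), hb1, one_smul]
          have h7 : r (b i0) = r a +
              ∑ l ∈ Finset.univ.erase i0, ((b.repr a l : ℤ) : ZMod 2) • r (b l) := by
            rw [hra, add_assoc, hxx _, add_zero]
          rw [h7]
          refine Submodule.add_mem _ hamem (Submodule.sum_mem _ fun l hl => ?_)
          exact Submodule.smul_mem _ _ (hmem1 l (Finset.mem_erase.mp hl).1)
        have hspan : Submodule.span (ZMod 2) (Set.range k) = ⊤ := by
          rw [eq_top_iff]
          refine le_trans htople ?_
          rw [Submodule.span_le]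
          rintro _ ⟨l, rfl⟩
          show r (b l) ∈ Submodule.span (ZMod 2) (Set.range k)
          rcases eq_or_ne l i0 with rfl | hl
          · exact hmem0
          · exact hmem1 l hl
        have hrank : Module.finrank (ZMod 2) (Submodule.span (ZMod 2) (Set.range k)) = n := by
          rw [hspan, finrank_top, Module.finrank_pi, Fintype.card_fin]
        rw [det2_eq_of hrank hlam0 hrel]
        rw [Fin.sum_univ_castSucc]
        simp only [hlam_def, Fin.snoc_castSucc, Fin.snoc_last, add_zero]
        rw [Int.cast_sum, add_comm]


open Classical in
/-- binomial Vieta formula. For a binomial system `x^{vᵢ} = -1`, `i = 1,…,n`,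
with `V` the integer matrix of exponent vectors, `det V ≠ 0`, and `S` the (finite) set of its
solutions in the torus `(ℂ∖0)ⁿ`, the product of `x^a` over all solutions equals
`(-1)^{det₂(v̄₁,…,v̄ₙ,ā)}`, with the bars denoting reduction mod 2. -/
theorem binomial_vieta (n : ℕ) (V : Matrix (Fin n) (Fin n) ℤ) (hV : V.det ≠ 0)
    (a : Fin n → ℤ) (S : Finset (Fin n → ℂˣ))
    (hS : ∀ x : Fin n → ℂˣ, x ∈ S ↔ ∀ i, (∏ j, x j ^ V i j) = -1) :
    (∏ x ∈ S, ∏ j, x j ^ a j) =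
      (-1 : ℂˣ) ^ (det2 n (Fin.snoc (fun i j => ((V i j : ℤ) : ZMod 2))
        (fun j => ((a j : ℤ) : ZMod 2)))).val := by
  classical
  set v : Fin n → (Fin n → ℤ) := fun i => V i with hv_def
  have hli : LinearIndependent ℤ v := by
    rw [Fintype.linearIndependent_iff]
    intro g hg
    have hg' : Matrix.vecMul g V = 0 := by
      funext j
      have h1 := congrFun hg j
      simpa [Matrix.vecMul, dotProduct, hv_def, Finset.sum_apply] using h1
    have h2 : Matrix.vecMul g (V * V.adjugate) = 0 := by
      rw [← Matrix.vecMul_vecMul, hg', Matrix.zero_vecMul]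
    rw [Matrix.mul_adjugate] at h2
    intro i
    have h3 := congrFun h2 i
    simp only [Matrix.vecMul, dotProduct, Matrix.smul_apply, Matrix.one_apply,
      smul_eq_mul, mul_ite, mul_one, mul_zero, Finset.sum_ite_eq', Finset.mem_univ,
      if_true, Pi.zero_apply] at h3
    rcases mul_eq_zero.mp h3 with h4 | h4
    · exact h4
    · exact absurd h4 hV
  set N := Submodule.span ℤ (Set.range v) with hN_def
  set vB : Module.Basis (Fin n) ℤ N := Module.Basis.span hli with hvB_def
  have hvB : ∀ i, (vB i : Fin n → ℤ) = v i := fun i => congrArg Subtype.val (Module.Basis.span_apply hli i)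
  obtain ⟨m, snf⟩ := N.smithNormalForm (Pi.basisFun ℤ (Fin n))
  have hmn : n = m := by
    have e := vB.indexEquiv snf.bN
    simpa using Fintype.card_congr e
  subst hmn
  have hfb : Function.Bijective snf.f := Finite.injective_iff_bijective.mp snf.f.injective
  set eF : Fin n ≃ Fin n := Equiv.ofBijective snf.f hfb with heF_def
  set u : Fin n → ℤˣ := fun i => if snf.a i < 0 then -1 else 1 with hu_def
  set b : Module.Basis (Fin n) ℤ (Fin n → ℤ) := (snf.bM.reindex eF.symm).unitsSMul u with hb_def
  set d : Fin n → ℤ := fun i => snf.a i * (u i : ℤ) with hd_def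
  have ha0 : ∀ i, snf.a i ≠ 0 := by
    intro i h0
    have h1 := snf.snf i
    rw [h0, zero_smul] at h1
    exact (snf.bN.ne_zero i) (Submodule.coe_eq_zero.mp h1)
  have hd : ∀ i, 0 < d i := by
    intro i
    show 0 < snf.a i * ((u i : ℤˣ) : ℤ)
    rcases lt_trichotomy (snf.a i) 0 with h | h | h
    · have hui : ((u i : ℤˣ) : ℤ) = -1 := by
        show (((if snf.a i < 0 then -1 else 1 : ℤˣ)) : ℤ) = -1
        rw [if_pos h]; rfl
      rw [hui]; nlinarith
    · exact absurd h (ha0 i)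
    · have hui : ((u i : ℤˣ) : ℤ) = 1 := by
        show (((if snf.a i < 0 then -1 else 1 : ℤˣ)) : ℤ) = 1
        rw [if_neg (not_lt.mpr h.le)]; rfl
      rw [hui]; nlinarith
  have huu : ∀ i, (u i : ℤ) * (u i : ℤ) = 1 := by
    intro i
    show (((if snf.a i < 0 then -1 else 1 : ℤˣ)) : ℤ) *
      (((if snf.a i < 0 then -1 else 1 : ℤˣ)) : ℤ) = 1
    split_ifs <;> norm_num
  have hsnf : ∀ i, (snf.bN i : Fin n → ℤ) = d i • b i := by
    intro i
    have h1 := snf.snf i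
    have hb_i : b i = (u i : ℤ) • snf.bM (snf.f i) := by
      rw [hb_def, Module.Basis.unitsSMul_apply, Module.Basis.reindex_apply, Equiv.symm_symm, Units.smul_def]
      congr 1
    rw [h1, hb_i, smul_smul, hd_def]
    rw [show snf.a i * ↑(u i) * ↑(u i) = snf.a i * (↑(u i) * ↑(u i)) from mul_assoc _ _ _,
      huu i, mul_one]
  have hvN : ∀ i, v i ∈ N := fun i => Submodule.subset_span (Set.mem_range_self i)
  set AM : Matrix (Fin n) (Fin n) ℤ :=
    Matrix.of (fun i l => snf.bN.repr ⟨v i, hvN i⟩ l) with hAM_def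
  set MM : Matrix (Fin n) (Fin n) ℤ :=
    Matrix.of (fun i j => vB.repr (snf.bN i) j) with hMM_def
  have hAM_app : ∀ i l, AM i l = snf.bN.repr ⟨v i, hvN i⟩ l := fun i l => rfl
  have hMM_app : ∀ i j, MM i j = vB.repr (snf.bN i) j := fun i j => rfl
  have hvb : ∀ i, v i = ∑ l, (AM i l * d l) • b l := by
    intro i
    have h1 : (⟨v i, hvN i⟩ : N) = ∑ l, AM i l • snf.bN l := by
      exact (snf.bN.sum_repr _).symm
    have h2 : v i = ∑ l, AM i l • ((snf.bN l : Fin n → ℤ)) := by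
      calc v i = ((⟨v i, hvN i⟩ : N) : Fin n → ℤ) := rfl
        _ = ((∑ l, AM i l • snf.bN l : N) : Fin n → ℤ) := by rw [h1]
        _ = ∑ l, AM i l • ((snf.bN l : Fin n → ℤ)) := by
            simp
    rw [h2]
    refine Finset.sum_congr rfl fun l _ => ?_
    rw [hsnf l, smul_smul]
  have hvA : ∀ i l, b.repr (v i) l = AM i l * d l := by
    intro i l
    conv_lhs => rw [hvb i]
    rw [b.repr_sum_self]
  have hMv : ∀ mm, d mm • b mm = ∑ j, MM mm j • v j := by
    intro mm
    have h1 : snf.bN mm = ∑ j, MM mm j • vB j := by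
      exact (vB.sum_repr _).symm
    have h2 : ((snf.bN mm : Fin n → ℤ)) = ∑ j, MM mm j • ((vB j : Fin n → ℤ)) := by
      calc ((snf.bN mm : Fin n → ℤ)) = ((∑ j, MM mm j • vB j : N) : Fin n → ℤ) := by rw [h1]
        _ = ∑ j, MM mm j • ((vB j : Fin n → ℤ)) := by simp
    rw [← hsnf mm, h2]
    refine Finset.sum_congr rfl fun j _ => ?_
    rw [hvB j]
  have hMA : MM * AM = 1 := by
    have key : ∀ mm kk, (∑ j, MM mm j * AM j kk) * d kk = (if kk = mm then d mm else 0) := by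
      intro mm kk
      have h3 : d mm • b mm = ∑ l, (∑ j, MM mm j * (AM j l * d l)) • b l := by
        rw [hMv mm]
        calc ∑ j, MM mm j • v j
            = ∑ j, MM mm j • ∑ l, (AM j l * d l) • b l :=
              Finset.sum_congr rfl fun j _ => by rw [← hvb j]
          _ = ∑ j, ∑ l, (MM mm j * (AM j l * d l)) • b l :=
              Finset.sum_congr rfl fun j _ => by
                rw [Finset.smul_sum]
                exact Finset.sum_congr rfl fun l _ => (mul_smul _ _ _).symm
          _ = ∑ l, ∑ j, (MM mm j * (AM j l * d l)) • b l := Finset.sum_comm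
          _ = ∑ l, (∑ j, MM mm j * (AM j l * d l)) • b l :=
              Finset.sum_congr rfl fun l _ => Finset.sum_smul.symm
      have h4 : ∑ l, (if l = mm then d mm else 0) • b l = d mm • b mm := by
        rw [Finset.sum_eq_single mm]
        · rw [if_pos rfl]
        · intro l _ hl; rw [if_neg hl, zero_smul]
        · intro h; exact absurd (Finset.mem_univ mm) h
      have h5 : ∀ l, (∑ j, MM mm j * (AM j l * d l)) = (if l = mm then d mm else 0) := by
        have h6b : (⇑(b.repr (∑ l, (∑ j, MM mm j * (AM j l * d l)) • b l)) : Fin n → ℤ) =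
            ⇑(b.repr (∑ l, (if l = mm then d mm else 0) • b l)) :=
          congrArg (fun z => ⇑(b.repr z)) (h3.symm.trans h4.symm)
        rw [b.repr_sum_self, b.repr_sum_self] at h6b
        intro l
        exact congrFun h6b l
      have h7 := h5 kk
      rw [← h7, Finset.sum_mul]
      exact Finset.sum_congr rfl fun j _ => by ring
    ext mm kk
    rw [Matrix.mul_apply, Matrix.one_apply]
    have h6 := key mm kk
    by_cases h : kk = mm
    · rw [if_pos h.symm]
      rw [if_pos h] at h6
      exact mul_right_cancel₀ (hd kk).ne' (by rw [one_mul, h6, h])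
    · rw [if_neg (fun hc => h hc.symm)]
      rw [if_neg h] at h6
      exact mul_right_cancel₀ (hd kk).ne' (by rw [zero_mul, h6])
  have hAMM : AM * MM = 1 := mul_eq_one_comm.mp hMA
  -- torus machinery
  set pw : (Fin n → ℂˣ) → (Fin n → ℤ) → ℂˣ := fun x w => ∏ j, x j ^ w j with hpw_def
  set E1 : (Fin n → Additive ℂˣ) ≃ₗ[ℕ] ((Fin n → ℤ) →ₗ[ℤ] Additive ℂˣ) :=
    (Pi.basisFun ℤ (Fin n)).constr ℕ with hE1_def
  set E2 : (Fin n → Additive ℂˣ) ≃ₗ[ℕ] ((Fin n → ℤ) →ₗ[ℤ] Additive ℂˣ) :=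
    b.constr ℕ with hE2_def
  have hE1 : ∀ (x : Fin n → ℂˣ) w,
      Additive.toMul (E1 (fun j => Additive.ofMul (x j)) w) = pw x w := by
    intro x w
    rw [hE1_def, Module.Basis.constr_apply_fintype, toMul_sum]
    refine Finset.prod_congr rfl fun j _ => ?_
    rw [Pi.basisFun_equivFun, toMul_zsmul]
    rfl
  have hE2 : ∀ (y : Fin n → ℂˣ) w,
      Additive.toMul (E2 (fun i => Additive.ofMul (y i)) w) = ∏ i, y i ^ (b.repr w i) := by
    intro y w
    rw [hE2_def, Module.Basis.constr_apply_fintype, toMul_sum]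
    refine Finset.prod_congr rfl fun i _ => ?_
    rw [Module.Basis.equivFun_apply, toMul_zsmul]
    rfl
  set Th : (Fin n → ℂˣ) → (Fin n → ℂˣ) := fun x i => pw x (b i) with hTh_def
  have hkey : ∀ x w, pw x w = ∏ i, (Th x i) ^ (b.repr w i) := by
    intro x w
    have hps : E1 (fun j => Additive.ofMul (x j)) = E2 (fun i => Additive.ofMul (Th x i)) := by
      apply b.ext
      intro i
      rw [hE2_def, Module.Basis.constr_basis]
      apply Additive.toMul.injective
      rw [hE1 x (b i)]
      rfl
    rw [← hE1 x w, hps, hE2]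
  have hThbij : Function.Bijective Th := by
    constructor
    · intro x x' hxx'
      have h1 : E1 (fun j => Additive.ofMul (x j)) = E1 (fun j => Additive.ofMul (x' j)) := by
        apply b.ext
        intro i
        apply Additive.toMul.injective
        rw [hE1 x (b i), hE1 x' (b i)]
        exact congrFun hxx' i
      have h2 := E1.injective h1
      funext j
      exact Additive.ofMul.injective (congrFun h2 j)
    · intro y
      set ps : (Fin n → ℤ) →ₗ[ℤ] Additive ℂˣ :=
        E2 (fun i => Additive.ofMul (y i)) with hps_def
      refine ⟨fun j => Additive.toMul (ps (Pi.single j 1)), ?_⟩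
      have hps1 : E1 (fun j => Additive.ofMul (Additive.toMul (ps (Pi.single j 1)))) = ps := by
        apply (Pi.basisFun ℤ (Fin n)).ext
        intro j
        rw [hE1_def, Module.Basis.constr_basis, Pi.basisFun_apply]
        simp
      funext i
      have h3 : Th (fun j => Additive.toMul (ps (Pi.single j 1))) i
          = Additive.toMul (E1 (fun j => Additive.ofMul
              (Additive.toMul (ps (Pi.single j 1)))) (b i)) := (hE1 _ (b i)).symm
      rw [h3, hps1, hps_def, hE2_def, Module.Basis.constr_basis]
      rfl
  set TE : (Fin n → ℂˣ) ≃ (Fin n → ℂˣ) := Equiv.ofBijective Th hThbij with hTE_def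
  have hneg_sum : ∀ (s : Finset (Fin n)) (c : Fin n → ℤ),
      (-1 : ℂˣ) ^ (∑ j ∈ s, c j) = ∏ j ∈ s, (-1 : ℂˣ) ^ (c j) := by
    intro s c
    have h0 := map_sum (zmultiplesHom (Additive ℂˣ) (Additive.ofMul (-1 : ℂˣ))) c s
    have h1 := congrArg Additive.toMul h0
    rw [toMul_sum] at h1
    simp only [zmultiplesHom_apply, toMul_zsmul, toMul_ofMul] at h1
    exact h1
  have hpw_hom : ∀ (x : Fin n → ℂˣ) (t : Fin n → ℤ) (g : Fin n → (Fin n → ℤ)),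
      pw x (∑ j, t j • g j) = ∏ j, (pw x (g j)) ^ (t j) := by
    intro x t g
    rw [← hE1 x, map_sum, toMul_sum]
    refine Finset.prod_congr rfl fun j _ => ?_
    rw [map_smul, toMul_zsmul, hE1]
  have hthd : ∀ x kk, (Th x kk) ^ (d kk) = pw x (d kk • b kk) := by
    intro x kk
    show pw x (b kk) ^ d kk = pw x (d kk • b kk)
    rw [← hE1 x (b kk), ← hE1 x (d kk • b kk), map_smul, toMul_zsmul]
  have hmemS : ∀ x, x ∈ S ↔ ∀ kk, (Th x kk) ^ (d kk) = (-1 : ℂˣ) ^ (∑ j, MM kk j) := by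
    intro x
    rw [hS x]
    constructor
    · intro hx kk
      rw [hthd x kk, hMv kk, hpw_hom]
      calc ∏ j, pw x (v j) ^ MM kk j
          = ∏ j, ((-1 : ℂˣ)) ^ MM kk j := Finset.prod_congr rfl fun j _ => by
            have h9 : pw x (v j) = -1 := hx j
            rw [h9]
        _ = (-1 : ℂˣ) ^ (∑ j, MM kk j) := (hneg_sum Finset.univ _).symm
    · intro hy i
      have h9 : pw x (v i) = -1 := by
        rw [hvb i]
        rw [hpw_hom x (fun l => AM i l * d l) (fun l => b l)]
        calc ∏ l, (pw x (b l)) ^ (AM i l * d l)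
            = ∏ l, ((-1 : ℂˣ) ^ (∑ j, MM l j)) ^ (AM i l) := by
              refine Finset.prod_congr rfl fun l _ => ?_
              rw [mul_comm (AM i l) (d l), zpow_mul]
              rw [show (pw x (b l)) ^ (d l) = (-1 : ℂˣ) ^ (∑ j, MM l j) from hy l]
          _ = ∏ l, (-1 : ℂˣ) ^ ((∑ j, MM l j) * AM i l) := by
              refine Finset.prod_congr rfl fun l _ => (zpow_mul _ _ _).symm
          _ = (-1 : ℂˣ) ^ (∑ l, (∑ j, MM l j) * AM i l) := (hneg_sum Finset.univ _).symm
          _ = -1 := by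
              have h10 : (∑ l, (∑ j, MM l j) * AM i l) = 1 := by
                calc ∑ l, (∑ j, MM l j) * AM i l
                    = ∑ l, ∑ j, MM l j * AM i l :=
                      Finset.sum_congr rfl fun l _ => by rw [Finset.sum_mul]
                  _ = ∑ j, ∑ l, MM l j * AM i l := Finset.sum_comm
                  _ = ∑ j, (AM * MM) i j :=
                      Finset.sum_congr rfl fun j _ => by
                        rw [Matrix.mul_apply]
                        exact Finset.sum_congr rfl fun l _ => mul_comm _ _
                  _ = ∑ j, (1 : Matrix (Fin n) (Fin n) ℤ) i j :=
                      Finset.sum_congr rfl fun j _ => by rw [hAMM]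
                  _ = 1 := by
                      simp [Matrix.one_apply]
              rw [h10, zpow_one]
      exact h9
  choose Rf hRmem hRcard hRprod using fun kk =>
    roots_finset (d kk).toNat (by have := hd kk; omega) ((-1 : ℂˣ) ^ (∑ j, MM kk j))
  have hRmem' : ∀ kk (z : ℂˣ), z ∈ Rf kk ↔ z ^ (d kk) = (-1 : ℂˣ) ^ (∑ j, MM kk j) := by
    intro kk z
    rw [hRmem kk z, ← zpow_natCast z ((d kk).toNat), Int.toNat_of_nonneg (hd kk).le]
  have hne : ∀ kk, (Rf kk).Nonempty := by
    intro kk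
    rw [← Finset.card_pos, hRcard kk]
    have := hd kk
    omega
  have hSeq : S = (Fintype.piFinset Rf).image TE.symm := by
    ext x
    rw [hmemS x]
    simp only [Finset.mem_image]
    constructor
    · intro hx
      refine ⟨TE x, ?_, TE.symm_apply_apply x⟩
      rw [Fintype.mem_piFinset]
      intro kk
      rw [hRmem']
      exact hx kk
    · rintro ⟨y, hy, rfl⟩
      intro kk
      rw [Fintype.mem_piFinset] at hy
      have h12 := (hRmem' kk (y kk)).mp (hy kk)
      have h13 : TE (TE.symm y) = y := TE.apply_symm_apply y
      have h14 : Th (TE.symm y) kk = y kk := by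
        conv_rhs => rw [← h13]
        rfl
      rw [h14]
      exact h12
  have hprod1 : (∏ x ∈ S, ∏ j, x j ^ a j)
      = ∏ y ∈ Fintype.piFinset Rf, ∏ i, (y i) ^ (b.repr a i) := by
    rw [hSeq, Finset.prod_image (fun y _ y' _ h => TE.symm.injective h)]
    refine Finset.prod_congr rfl fun y _ => ?_
    have h1 : (∏ j, (TE.symm y) j ^ a j) = pw (TE.symm y) a := rfl
    rw [h1, hkey]
    refine Finset.prod_congr rfl fun i _ => ?_
    have h14 : Th (TE.symm y) i = y i := by
      conv_rhs => rw [← TE.apply_symm_apply y]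
      rfl
    rw [h14]
  rw [hprod1, Finset.prod_comm]
  have hstep : ∀ i, (∏ y ∈ Fintype.piFinset Rf, (y i) ^ (b.repr a i)) =
      (-1 : ℂˣ) ^ ((d i + 1 + ∑ j, MM i j) * b.repr a i *
        ((∏ j, if j = i then 1 else (d j).toNat : ℕ) : ℤ)) := by
    intro i
    rw [piFinset_prod_eval Rf hne i (b.repr a i), hRprod i]
    have hcards : (∏ j, if j = i then 1 else (Rf j).card)
        = (∏ j, if j = i then 1 else (d j).toNat) := by
      refine Finset.prod_congr rfl fun j _ => ?_
      split_ifs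
      · rfl
      · rw [hRcard j]
    rw [hcards]
    rw [show ((-1 : ℂˣ) ^ ((d i).toNat + 1)) = (-1 : ℂˣ) ^ ((d i + 1 : ℤ)) from by
      rw [← zpow_natCast (-1 : ℂˣ) ((d i).toNat + 1)]
      congr 1
      push_cast [Int.toNat_of_nonneg (hd i).le]
      ring]
    rw [← zpow_add, ← zpow_mul]
    rw [← zpow_natCast ((-1 : ℂˣ) ^ ((d i + 1 + ∑ j, MM i j) * b.repr a i))
      (∏ j, if j = i then 1 else (d j).toNat), ← zpow_mul]
  rw [Finset.prod_congr rfl (fun i _ => hstep i)]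
  rw [← hneg_sum Finset.univ _]
  have hpar : ∀ t : ℤ, (-1 : ℂˣ) ^ t = (-1 : ℂˣ) ^ (((t : ZMod 2)).val) := by
    intro t
    have h4 : ((-1 : ℂˣ)) ^ (2 : ℤ) = 1 := by
      rw [show (2 : ℤ) = ((2 : ℕ) : ℤ) from rfl, zpow_natCast, sq, neg_one_mul, neg_neg]
    rcases Int.even_or_odd t with ⟨s, hs⟩ | ⟨s, hs⟩
    · subst hs
      rw [show s + s = 2 * s from by ring, zpow_mul, h4, one_zpow]
      rw [show (((2 * s : ℤ) : ZMod 2)) = 0 from by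
        push_cast
        rw [show ((2 : ZMod 2)) = 0 from rfl]
        ring]
      rw [show ((0 : ZMod 2)).val = 0 from rfl, pow_zero]
    · subst hs
      rw [zpow_add, zpow_one, zpow_mul, h4, one_zpow, one_mul]
      rw [show (((2 * s + 1 : ℤ) : ZMod 2)) = 1 from by
        push_cast
        rw [show ((2 : ZMod 2)) = 0 from rfl]
        ring]
      rw [show ((1 : ZMod 2)).val = 1 from rfl, pow_one]
  rw [hpar]
  have hz := zmod_side b d v a MM AM hd hvA hMv hMA
  have hz' : ((∑ i, (d i + 1 + (∑ j, MM i j)) * b.repr a i *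
      ((∏ j, if j = i then 1 else (d j).toNat : ℕ) : ℤ) : ℤ) : ZMod 2) =
      det2 n (Fin.snoc (fun i j => ((V i j : ℤ) : ZMod 2))
        (fun j => ((a j : ℤ) : ZMod 2))) := hz
  rw [hz']
end
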